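/- arXiv:2012.15818 — 9 statements merged into one kernel-verified Lean document; each statement's English description precedes it below -/
import Mathlib

section
/- For every balanced word w over an N-letter alphabet and every length n with 1 ≤ n ≤ |w|, the abelian complexity ρ_n(w) (the number of distinct Parikh vectors of factors of w of length n) is at most the central binomial coefficient K_N = max_k C(N,k) = C(N, ⌊N/2⌋). -/
/-- Two words are conjugate (cyclic rotations of each other). -/
def Conj {α : Type*} (w w' : List α) : Prop := ∃ x y : List α, w = x ++ y ∧ w' = y ++ x

/-- `u` is a factor of the circular word `[w]`. -/
def CFactor {α : Type*} (u w : List α) : Prop := ∃ w' : List α, Conj w w' ∧ u <:+: w'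

/-- A (linear) word is balanced. -/
def WordIsBalanced {α : Type*} [DecidableEq α] (w : List α) : Prop :=
  ∀ u v : List α, u <:+: w → v <:+: w → u.length = v.length →
    ∀ a : α, ((u.count a : ℤ) - v.count a) ∈ ({-1, 0, 1} : Set ℤ)

/-- A circular word is balanced. -/
def CircBalanced {α : Type*} [DecidableEq α] (w : List α) : Prop :=
  ∀ u v : List α, CFactor u w → CFactor v w → u.length = v.length →
    ∀ a : α, ((u.count a : ℤ) - v.count a) ∈ ({-1, 0, 1} : Set ℤ)

/-- The n-spectrum of a circular word: Parikh vectors of its length-n factors. -/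
def circSpec {α : Type*} [DecidableEq α] (n : ℕ) (w : List α) : Set (α → ℕ) :=
  {p | ∃ u : List α, CFactor u w ∧ u.length = n ∧ (fun a => u.count a) = p}

/-- Abelian complexity of a circular word. -/
noncomputable def circAb {α : Type*} [DecidableEq α] (n : ℕ) (w : List α) : ℕ :=
  (circSpec n w).ncard

/-- A word is primitive if it is not a proper power. -/
def Primitive {α : Type*} (w : List α) : Prop :=
  ∀ (u : List α) (q : ℕ), 2 ≤ q → w ≠ (List.replicate q u).flatten

/-- The lower Christoffel word `C(k, M-k)` of length `M` with `k` zeros. -/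
def christoffel (k M : ℕ) : List (Fin 2) :=
  (List.range M).map (fun i => if i * (M - k) / M < (i + 1) * (M - k) / M then 1 else 0)

/-- The n-spectrum of a (linear) word. -/
def spec {α : Type*} [DecidableEq α] (n : ℕ) (w : List α) : Set (α → ℕ) :=
  {p | ∃ u : List α, u <:+: w ∧ u.length = n ∧ (fun a => u.count a) = p}

theorem stmt_1 {N : ℕ} (w : List (Fin N)) (hw : WordIsBalanced w)
    (n : ℕ) (h1 : 1 ≤ n) (h2 : n ≤ w.length) :
    (spec n w).ncard ≤ N.choose (N / 2) := by
  classical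
  set S := spec n w with hS
  have hne : S.Nonempty := by
    refine ⟨fun a => (w.take n).count a, w.take n, (w.take_prefix n).isInfix, ?_, rfl⟩
    simpa using h2
  -- balance step: any two spectra differ by at most 1 per letter
  have hstep : ∀ p ∈ S, ∀ q ∈ S, ∀ a, p a ≤ q a + 1 := by
    rintro p ⟨u, hu, hul, rfl⟩ q ⟨v, hv, hvl, rfl⟩ a
    have := hw u v hu hv (hul.trans hvl.symm) a
    simp only [Set.mem_insert_iff, Set.mem_singleton_iff] at this
    dsimp only
    omega
  -- sum of counts equals length
  have hsum : ∀ p ∈ S, ∑ a, p a = n := by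
    rintro p ⟨u, hu, hul, rfl⟩
    have h := Multiset.sum_count_eq_card (s := (Finset.univ : Finset (Fin N)))
      (m := (↑u : Multiset (Fin N))) (fun a _ => Finset.mem_univ a)
    simpa [hul] using h
  -- minimal counts
  set c : Fin N → ℕ := fun a => sInf ((fun p => p a) '' S) with hc
  have hcmem : ∀ a, ∃ p ∈ S, p a = c a := by
    intro a
    have : c a ∈ (fun p => p a) '' S := Nat.sInf_mem (hne.image _)
    obtain ⟨p, hp, hpe⟩ := this
    exact ⟨p, hp, hpe⟩
  have hcle : ∀ p ∈ S, ∀ a, c a ≤ p a := by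
    intro p hp a
    exact Nat.sInf_le ⟨p, hp, rfl⟩
  have hcub : ∀ p ∈ S, ∀ a, p a ≤ c a + 1 := by
    intro p hp a
    obtain ⟨q, hq, hqe⟩ := hcmem a
    have := hstep p hp q hq a
    omega
  set k : ℕ := n - ∑ a, c a with hk
  set F : (Fin N → ℕ) → Finset (Fin N) := fun p => Finset.univ.filter (fun a => c a < p a)
    with hF
  -- card of F p is k for p ∈ S
  have hcard : ∀ p ∈ S, (F p).card = k := by
    intro p hp
    have h1' : ∑ a, p a = ∑ a, (c a + if c a < p a then 1 else 0) := by
      refine Finset.sum_congr rfl fun a _ => ?_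
      have := hcle p hp a
      have := hcub p hp a
      split <;> omega
    rw [Finset.sum_add_distrib] at h1'
    have h2' : (F p).card = ∑ a, if c a < p a then 1 else 0 := Finset.card_filter _ _
    rw [hsum p hp] at h1'
    rw [hk, h2']
    omega
  -- injectivity of F on S
  have hinj : Set.InjOn F S := by
    intro p hp q hq hpq
    funext a
    by_cases hmem : a ∈ F p
    · have hmem' : a ∈ F q := hpq ▸ hmem
      simp only [hF, Finset.mem_filter] at hmem hmem'
      have := hcub p hp a; have := hcub q hq a
      omega
    · have hmem' : a ∉ F q := fun h => hmem (hpq ▸ h)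
      simp only [hF, Finset.mem_filter, Finset.mem_univ, true_and, not_lt] at hmem hmem'
      have := hcle p hp a; have := hcle q hq a
      omega
  have himg : F '' S ⊆ ↑(Finset.powersetCard k (Finset.univ : Finset (Fin N))) := by
    rintro s ⟨p, hp, rfl⟩
    simp [Finset.mem_powersetCard_univ, hcard p hp]
  calc S.ncard = (F '' S).ncard := (Set.ncard_image_of_injOn hinj).symm
    _ ≤ (Finset.powersetCard k (Finset.univ : Finset (Fin N)) : Set (Finset (Fin N))).ncard :=
        Set.ncard_le_ncard himg (Finset.finite_toSet _)
    _ = N.choose k := by rw [Set.ncard_coe_finset]; simp [Finset.card_powersetCard]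
    _ ≤ N.choose (N / 2) := Nat.choose_le_middle k N
end

section
/- Let [w] be a primitive circular word over the alphabet A_N containing each letter at least once, and let p ≥ 2 be an integer. Then [w] is balanced if and only if its p-th power [w^p] is balanced. -/
namespace Aux3

lemma conj_refl {α : Type*} (w : List α) : Conj w w := ⟨[], w, rfl, by simp⟩

lemma cfactor_of_infix {α : Type*} {u w : List α} (h : u <:+: w) : CFactor u w :=
  ⟨w, conj_refl w, h⟩

/-- splitting an infix of an append -/
lemma infix_append_split {α : Type*} {u a b : List α} (h : u <:+: a ++ b) :
    u <:+: a ∨ u <:+: b ∨ ∃ u₁ u₂, u = u₁ ++ u₂ ∧ u₁ <:+ a ∧ u₂ <+: b := by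
  obtain ⟨s, t, h⟩ := h
  rw [List.append_assoc] at h
  rcases List.append_eq_append_iff.mp h.symm with ⟨a', ha', hb⟩ | ⟨c', hc', hd⟩
  · exact Or.inr (Or.inl ⟨a', t, by rw [hb, List.append_assoc]⟩)
  · rcases List.append_eq_append_iff.mp hd with ⟨a₂, hc, ht⟩ | ⟨k, hu, hb⟩
    · exact Or.inl ⟨s, a₂, by rw [hc', hc, List.append_assoc]⟩
    · exact Or.inr (Or.inr ⟨c', k, hu, ⟨s, hc'.symm⟩, ⟨t, hb.symm⟩⟩)

lemma flatten_replicate_succ {α : Type*} (n : ℕ) (c : List α) :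
    (List.replicate (n+1) c).flatten = c ++ (List.replicate n c).flatten := rfl

lemma flatten_replicate_comm {α : Type*} (n : ℕ) (c : List α) :
    c ++ (List.replicate n c).flatten = (List.replicate n c).flatten ++ c := by
  induction n with
  | zero => simp
  | succ n ih =>
    rw [flatten_replicate_succ]
    conv_lhs => rw [ih]
    rw [List.append_assoc]

lemma pow_conj_identity {α : Type*} (n : ℕ) (x y : List α) :
    (List.replicate (n+1) (x ++ y)).flatten = x ++ (List.replicate n (y ++ x)).flatten ++ y := by
  induction n with
  | zero => simp
  | succ n ih =>
    rw [flatten_replicate_succ, ih, flatten_replicate_succ]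
    simp [List.append_assoc]

lemma conj_pow {α : Type*} {w z : List α} (h : Conj w z) (n : ℕ) :
    Conj ((List.replicate (n+1) w).flatten) ((List.replicate (n+1) z).flatten) := by
  obtain ⟨x, y, hw, hz⟩ := h
  refine ⟨x, (List.replicate n (y ++ x)).flatten ++ y, ?_, ?_⟩
  · rw [hw, pow_conj_identity, List.append_assoc]
  · rw [hz, flatten_replicate_succ, flatten_replicate_comm, ← List.append_assoc]

lemma prefix_append_left {α : Type*} {u v r : List α} (h : u <+: v ++ r)
    (hl : u.length ≤ v.length) : u <+: v := by
  have h1 : u = (v ++ r).take u.length := List.prefix_iff_eq_take.mp h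
  rw [List.take_append_of_le_length hl] at h1
  exact h1 ▸ List.take_prefix _ v

lemma prefix_of_prefix_flatten {α : Type*} {u v : List α} {p : ℕ}
    (h : u <+: (List.replicate p v).flatten) (hl : u.length ≤ v.length) : u <+: v := by
  cases p with
  | zero => simp only [List.replicate_zero, List.flatten_nil, List.prefix_nil] at h; simp [h]
  | succ p =>
    rw [flatten_replicate_succ] at h
    exact prefix_append_left h hl

/-- A short factor of a power is a circular factor. -/
lemma cfactor_of_infix_pow {α : Type*} {v : List α} (p : ℕ) :
    ∀ u : List α, u <:+: (List.replicate p v).flatten → u.length ≤ v.length → CFactor u v := by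
  induction p with
  | zero =>
    intro u h _
    simp only [List.replicate_zero, List.flatten_nil, List.infix_nil] at h
    subst h; exact cfactor_of_infix List.nil_infix
  | succ p ih =>
    intro u h hl
    rw [flatten_replicate_succ] at h
    rcases infix_append_split h with h | h | ⟨u₁, u₂, rfl, h₁, h₂⟩
    · exact cfactor_of_infix h
    · exact ih u h hl
    · -- u₂ is a prefix of v
      have hu₂len : u₂.length ≤ v.length := by
        have := (List.length_append : (u₁ ++ u₂).length = _) ▸ hl; omega
      have hu₂v : u₂ <+: v := prefix_of_prefix_flatten h₂ hu₂len
      obtain ⟨x, hx⟩ := h₁  -- v = x ++ u₁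
      refine ⟨u₁ ++ x, ⟨x, u₁, hx.symm, rfl⟩, ?_⟩
      have hxpre : x <+: v := ⟨u₁, hx⟩
      have hxlen : u₂.length ≤ x.length := by
        have h1 := congrArg List.length hx
        simp only [List.length_append] at h1 hl
        omega
      have : u₂ <+: x := List.prefix_of_prefix_length_le hu₂v hxpre hxlen
      obtain ⟨z, hz⟩ := this
      exact List.IsPrefix.isInfix ⟨z, by rw [List.append_assoc, hz]⟩

end Aux3

namespace Aux3

lemma count_full {α : Type*} [DecidableEq α] {v u : List α} {p : ℕ}
    (h : u <:+: (List.replicate p v).flatten) (hl : u.length = v.length) (a : α) :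
    u.count a = v.count a := by
  obtain ⟨z, ⟨x, y, h1, h2⟩, hinf⟩ := cfactor_of_infix_pow p u h hl.le
  have hzlen : z.length = v.length := by rw [h1, h2]; simp [Nat.add_comm]
  have := hinf.eq_of_length (hl.trans hzlen.symm)
  subst this
  rw [h2, h1, List.count_append, List.count_append, Nat.add_comm]

lemma count_decomp {α : Type*} [DecidableEq α] {v : List α} (hv : v ≠ []) :
    ∀ n : ℕ, ∀ u : List α, u.length = n → ∀ p : ℕ, u <:+: (List.replicate p v).flatten →
    ∃ u', CFactor u' v ∧ u'.length = u.length % v.length ∧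
      ∀ a, u.count a = u.length / v.length * v.count a + u'.count a := by
  intro n
  induction n using Nat.strong_induction_on with
  | _ n ih =>
    intro u hlen p hinf
    by_cases hle : u.length < v.length
    · exact ⟨u, cfactor_of_infix_pow p u hinf hle.le,
        (Nat.mod_eq_of_lt hle).symm, fun a => by rw [Nat.div_eq_of_lt hle]; simp⟩
    · push_neg at hle
      have hL : 0 < v.length := List.length_pos_iff.mpr hv
      have ht : u.take v.length <:+: (List.replicate p v).flatten :=
        (List.take_prefix _ u).isInfix.trans hinf
      have hd : u.drop v.length <:+: (List.replicate p v).flatten :=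
        (List.drop_suffix _ u).isInfix.trans hinf
      have htlen : (u.take v.length).length = v.length := by
        rw [List.length_take]; omega
      obtain ⟨u', hcf, hlen', hcount⟩ :=
        ih (u.drop v.length).length (by rw [List.length_drop]; omega)
          (u.drop v.length) rfl p hd
      refine ⟨u', hcf, ?_, ?_⟩
      · rw [hlen', List.length_drop, ← Nat.mod_eq_sub_mod hle]
      · intro a
        have hsplit : u.count a = (u.take v.length).count a + (u.drop v.length).count a := by
          rw [← List.count_append, List.take_append_drop]
        have hdiv : u.length / v.length = (u.length - v.length) / v.length + 1 :=
          Nat.div_eq_sub_div hL hle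
        rw [hsplit, count_full ht htlen, hcount a, List.length_drop, hdiv, Nat.add_mul,
          Nat.one_mul]
        ring

lemma cfactor_infix_double {α : Type*} {u m : List α} (h : CFactor u m) : u <:+: m ++ m := by
  obtain ⟨z, ⟨x, y, h1, h2⟩, hinf⟩ := h
  refine hinf.trans ⟨x, y, ?_⟩
  rw [h1, h2]
  simp [List.append_assoc]

lemma cfactor_pow {α : Type*} {u w : List α} (h : CFactor u w) (n : ℕ) :
    CFactor u ((List.replicate (n+1) w).flatten) := by
  obtain ⟨z, hconj, hinf⟩ := h
  refine ⟨(List.replicate (n+1) z).flatten, conj_pow hconj n, hinf.trans ?_⟩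
  rw [flatten_replicate_succ]
  exact (List.prefix_append z _).isInfix

lemma cfactor_nil_eq {α : Type*} {u : List α} (h : CFactor u []) : u = [] := by
  obtain ⟨z, ⟨x, y, h1, h2⟩, hinf⟩ := h
  obtain ⟨hx, hy⟩ := List.append_eq_nil_iff.mp h1.symm
  subst hx; subst hy
  simpa using List.infix_nil.mp (by simpa [h2] using hinf)

end Aux3


theorem stmt_3 {N : ℕ} (w : List (Fin N)) (hprim : Primitive w)
    (hall : ∀ a : Fin N, a ∈ w) (p : ℕ) (hp : 2 ≤ p) :
    CircBalanced w ↔ CircBalanced ((List.replicate p w).flatten) := by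
  by_cases hw : w = []
  · subst hw
    have h0 : CircBalanced ([] : List (Fin N)) := by
      intro u v hu hv _ a
      rw [Aux3.cfactor_nil_eq hu, Aux3.cfactor_nil_eq hv]
      simp
    have hrep : (List.replicate p ([] : List (Fin N))).flatten = [] := by simp
    rw [hrep]
  · constructor
    · intro hbal u v hu hv hlen a
      have hu2 : u <:+: (List.replicate (p+p) w).flatten := by
        have := Aux3.cfactor_infix_double hu
        rwa [← List.flatten_append, ← List.replicate_add] at this
      have hv2 : v <:+: (List.replicate (p+p) w).flatten := by
        have := Aux3.cfactor_infix_double hv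
        rwa [← List.flatten_append, ← List.replicate_add] at this
      obtain ⟨u', hcu, hlu, hcntu⟩ := Aux3.count_decomp hw u.length u rfl (p+p) hu2
      obtain ⟨v', hcv, hlv, hcntv⟩ := Aux3.count_decomp hw v.length v rfl (p+p) hv2
      have key : (u.count a : ℤ) - v.count a = (u'.count a : ℤ) - v'.count a := by
        rw [hcntu a, hcntv a, hlen]
        push_cast
        ring
      rw [key]
      exact hbal u' v' hcu hcv (by rw [hlu, hlv, hlen]) a
    · intro hbal u v hu hv hlen a
      obtain ⟨p', rfl⟩ : ∃ p', p = p' + 1 := ⟨p - 1, by omega⟩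
      exact hbal u v (Aux3.cfactor_pow hu p') (Aux3.cfactor_pow hv p') hlen a
end

section
/- A circular word over the binary alphabet {0,1} containing both letters is balanced if and only if it contains a representative which is a power of a Christoffel word. -/
namespace Stmt7Aux

lemma fin2 (x : Fin 2) : x = 0 ∨ x = 1 := by fin_cases x <;> simp

lemma count01 (u : List (Fin 2)) : u.count 0 + u.count 1 = u.length := by
  induction u with
  | nil => simp
  | cons a t ih =>
    rcases fin2 a with rfl | rfl <;> simp [List.count_cons] <;> omega

lemma conj_iff_rotate {α : Type*} (w w' : List α) :
    Conj w w' ↔ ∃ n, w' = w.rotate n := by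
  constructor
  · rintro ⟨x, y, rfl, rfl⟩
    refine ⟨x.length, ?_⟩
    rw [List.rotate_eq_drop_append_take (by simp)]
    simp
  · rintro ⟨n, rfl⟩
    rcases Nat.eq_zero_or_pos w.length with hL | hL
    · rw [List.eq_nil_of_length_eq_zero hL]
      exact ⟨[], [], by simp, by simp⟩
    · refine ⟨w.take (n % w.length), w.drop (n % w.length),
        (List.take_append_drop _ w).symm, ?_⟩
      rw [← List.rotate_mod, List.rotate_eq_drop_append_take (le_of_lt (Nat.mod_lt _ hL))]

lemma conj_symm {α : Type*} {w w' : List α} (h : Conj w w') : Conj w' w := by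
  obtain ⟨x, y, hx, hy⟩ := h; exact ⟨y, x, hy, hx⟩

lemma conj_trans {α : Type*} {a b c : List α} (h1 : Conj a b) (h2 : Conj b c) : Conj a c := by
  rw [conj_iff_rotate] at *
  obtain ⟨n, rfl⟩ := h1; obtain ⟨m, rfl⟩ := h2
  exact ⟨n + m, by rw [List.rotate_rotate]⟩

lemma cfactor_of_conj {α : Type*} {u w z : List α} (h : Conj w z) (hf : CFactor u z) :
    CFactor u w := by
  obtain ⟨w', hc, hi⟩ := hf
  exact ⟨w', conj_trans h hc, hi⟩

/-- periodic indicator of letter `1` at position `t`. -/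
def cw (w : List (Fin 2)) (t : ℕ) : ℕ :=
  if w.getD (t % w.length) 0 = 1 then 1 else 0

/-- number of `1`s in the length-`n` cyclic window starting at position `t`. -/
def W (w : List (Fin 2)) (t n : ℕ) : ℕ := ∑ i ∈ Finset.range n, cw w (t + i)

lemma cw_le_one (w : List (Fin 2)) (t : ℕ) : cw w t ≤ 1 := by
  unfold cw; split <;> omega

lemma cw_mod (w : List (Fin 2)) (t : ℕ) : cw w (t % w.length) = cw w t := by
  unfold cw; rw [Nat.mod_mod_of_dvd _ dvd_rfl]

lemma cw_add_length (w : List (Fin 2)) (t : ℕ) : cw w (t + w.length) = cw w t := by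
  unfold cw; rw [Nat.add_mod_right]

lemma count_eq_sum (l : List (Fin 2)) (a : Fin 2) :
    l.count a = ∑ i ∈ Finset.range l.length, if l.getD i 0 = a then 1 else 0 := by
  induction l with
  | nil => simp
  | cons x t ih =>
    rw [List.count_cons, List.length_cons, Finset.sum_range_succ']
    simp only [List.getD_cons_succ, List.getD_cons_zero]
    rw [← ih]
    by_cases hxa : x = a <;> simp [hxa]

lemma W_mod (w : List (Fin 2)) (t n : ℕ) : W w (t % w.length) n = W w t n := by
  unfold W
  refine Finset.sum_congr rfl fun i _ => ?_
  rw [← cw_mod w (t % w.length + i), Nat.mod_add_mod, cw_mod]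

lemma W_add (w : List (Fin 2)) (t m n : ℕ) : W w t (m + n) = W w t m + W w (t + m) n := by
  unfold W
  rw [Finset.sum_range_add]
  congr 1
  exact Finset.sum_congr rfl fun i _ => by rw [Nat.add_assoc]

lemma W_succ (w : List (Fin 2)) (t n : ℕ) : W w t (n + 1) = W w t n + cw w (t + n) :=
  Finset.sum_range_succ _ _

lemma sum_period (w : List (Fin 2)) (t : ℕ) : W w t w.length = w.count 1 := by
  induction t with
  | zero =>
    rw [count_eq_sum]
    unfold W
    refine Finset.sum_congr rfl fun i hi => ?_
    simp only [Finset.mem_range] at hi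
    unfold cw
    rw [Nat.zero_add, Nat.mod_eq_of_lt hi]
  | succ t ih =>
    have e1 := Finset.sum_range_succ' (fun i => cw w (t + i)) w.length
    have e2 := Finset.sum_range_succ (fun i => cw w (t + i)) w.length
    have e3 : ∑ i ∈ Finset.range w.length, cw w (t + (i + 1))
        = ∑ i ∈ Finset.range w.length, cw w (t + 1 + i) :=
      Finset.sum_congr rfl fun i _ => by rw [show t + (i + 1) = t + 1 + i by ring]
    have e4 : cw w (t + w.length) = cw w t := cw_add_length w t
    simp only [e3, e4, Nat.add_zero] at e1
    unfold W at *
    omega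

lemma factor_count {u w : List (Fin 2)} (hw : 0 < w.length) (hf : CFactor u w) :
    u.length ≤ w.length ∧ ∃ t, u.count 1 = W w t u.length := by
  obtain ⟨w', hc, p, s, hps⟩ := hf
  obtain ⟨m, rfl⟩ := (conj_iff_rotate w w').mp hc
  have hlen : p.length + u.length + s.length = w.length := by
    have h := congrArg List.length hps
    simpa [List.length_append, List.length_rotate, Nat.add_assoc] using h
  refine ⟨by omega, m + p.length, ?_⟩
  rw [count_eq_sum]
  unfold W
  refine Finset.sum_congr rfl fun i hi => ?_
  simp only [Finset.mem_range] at hi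
  have hu : u = ((w.rotate m).drop p.length).take u.length := by
    rw [← hps, List.append_assoc, List.drop_left, List.take_left]
  have h1 : i < (((w.rotate m).drop p.length).take u.length).length := by
    simp [List.length_rotate]; omega
  have key : u.getD i 0 = w.getD ((m + p.length + i) % w.length) 0 := by
    conv_lhs => rw [hu]
    rw [List.getD_eq_getElem _ _ h1, List.getElem_take, List.getElem_drop,
      List.getElem_rotate, List.getD_eq_getElem _ _ (Nat.mod_lt _ hw)]
    congr 2
    ring
  unfold cw
  rw [key]

lemma window_factor (w : List (Fin 2)) (hw : 0 < w.length) (t n : ℕ) (hn : n ≤ w.length) :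
    ∃ u, CFactor u w ∧ u.length = n ∧ u.count 1 = W w t n := by
  refine ⟨(w.rotate t).take n, ⟨w.rotate t, (conj_iff_rotate _ _).mpr ⟨t, rfl⟩,
    (List.take_prefix _ _).isInfix⟩, by simp [hn], ?_⟩
  rw [count_eq_sum]
  have hlen : ((w.rotate t).take n).length = n := by simp [hn]
  rw [hlen]
  unfold W
  refine Finset.sum_congr rfl fun i hi => ?_
  simp only [Finset.mem_range] at hi
  have h1 : i < ((w.rotate t).take n).length := by omega
  have key : ((w.rotate t).take n).getD i 0 = w.getD ((t + i) % w.length) 0 := by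
    rw [List.getD_eq_getElem _ _ h1, List.getElem_take, List.getElem_rotate,
      List.getD_eq_getElem _ _ (Nat.mod_lt _ hw)]
    congr 2
    ring
  unfold cw
  rw [key]

/-- the mechanical letter: 1 iff the floor sequence jumps. -/
def cf (h L t : ℕ) : ℕ := (t + 1) * h / L - t * h / L

lemma div_mono (h L : ℕ) {a b : ℕ} (hab : a ≤ b) : a * h / L ≤ b * h / L :=
  Nat.div_le_div_right (Nat.mul_le_mul_right _ hab)

lemma cf_sum (h L : ℕ) (t n : ℕ) :
    ∑ i ∈ Finset.range n, cf h L (t + i) = (t + n) * h / L - t * h / L := by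
  induction n with
  | zero => simp
  | succ n ih =>
    rw [Finset.sum_range_succ, ih]
    unfold cf
    have m1 := div_mono h L (show t ≤ t + n by omega)
    have m2 := div_mono h L (show t + n ≤ t + n + 1 by omega)
    have e : t + n + 1 = t + (n + 1) := by ring
    rw [← e]
    omega

lemma period_shift (h L : ℕ) (hL : 0 < L) (r q : ℕ) :
    (r + q * L) * h / L = r * h / L + q * h := by
  rw [show (r + q * L) * h = r * h + L * (q * h) by ring, Nat.add_mul_div_left _ _ hL]

lemma jump_mod (h L : ℕ) (hL : 0 < L) (t : ℕ) :
    (t * h / L < (t + 1) * h / L ↔ (t % L) * h / L < (t % L + 1) * h / L) := by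
  have e1 : t * h / L = (t % L) * h / L + t / L * h := by
    conv_lhs => rw [show t = t % L + t / L * L by have := Nat.mod_add_div' t L; omega]
    exact period_shift h L hL _ _
  have e2 : (t + 1) * h / L = (t % L + 1) * h / L + t / L * h := by
    conv_lhs => rw [show t + 1 = (t % L + 1) + t / L * L by have := Nat.mod_add_div' t L; omega]
    exact period_shift h L hL _ _
  omega

lemma div_bounds (h L t n : ℕ) (hL : 0 < L) :
    t * h / L + n * h / L ≤ (t + n) * h / L ∧
    (t + n) * h / L ≤ t * h / L + n * h / L + 1 := by
  constructor
  · rw [Nat.le_div_iff_mul_le hL, Nat.add_mul, Nat.add_mul]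
    exact Nat.add_le_add (Nat.div_mul_le_self _ _) (Nat.div_mul_le_self _ _)
  · have h2 : (t + n) * h / L < t * h / L + n * h / L + 2 := by
      rw [Nat.div_lt_iff_lt_mul hL]
      have h3 : t * h < (t * h / L + 1) * L := (Nat.div_lt_iff_lt_mul hL).mp (Nat.lt_succ_self _)
      have h4 : n * h < (n * h / L + 1) * L := (Nat.div_lt_iff_lt_mul hL).mp (Nat.lt_succ_self _)
      calc (t + n) * h = t * h + n * h := by ring
      _ < (t * h / L + 1) * L + (n * h / L + 1) * L := by omega
      _ = (t * h / L + n * h / L + 2) * L := by ring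
    omega

lemma cf_le_one (h L : ℕ) (hh : h < L) (t : ℕ) : cf h L t ≤ 1 := by
  unfold cf
  have hL : 0 < L := by omega
  have h1 : (t + 1) * h / L < t * h / L + 2 := by
    rw [Nat.div_lt_iff_lt_mul hL]
    have h3 : t * h < (t * h / L + 1) * L := (Nat.div_lt_iff_lt_mul hL).mp (Nat.lt_succ_self _)
    calc (t + 1) * h = t * h + h := by ring
    _ < (t * h / L + 1) * L + L := by omega
    _ = (t * h / L + 2) * L := by ring
  omega

/-- the lower mechanical word of length `L` with `h` ones. -/
def mechList (h L : ℕ) : List (Fin 2) :=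
  (List.range L).map (fun i => if i * h / L < (i + 1) * h / L then 1 else 0)

lemma christoffel_eq_mech (k M : ℕ) : christoffel k M = mechList (M - k) M := rfl

lemma mechList_length (h L : ℕ) : (mechList h L).length = L := by simp [mechList]

lemma mechList_getD (h L i : ℕ) (hi : i < L) :
    (mechList h L).getD i 0 = if i * h / L < (i + 1) * h / L then 1 else 0 := by
  rw [List.getD_eq_getElem _ _ (by rw [mechList_length]; exact hi)]
  simp [mechList]

lemma cw_mech (h L : ℕ) (hh : 0 < h) (hhL : h < L) (t : ℕ) :
    cw (mechList h L) t = cf h L t := by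
  have hL : 0 < L := by omega
  unfold cw
  rw [mechList_length, mechList_getD _ _ _ (Nat.mod_lt _ hL)]
  rw [← cf_mod']
  · unfold cf
    have m2 := div_mono h L (show t % L ≤ t % L + 1 by omega)
    have hle := cf_le_one h L hhL (t % L)
    unfold cf at hle
    by_cases hj : (t % L) * h / L < (t % L + 1) * h / L
    · rw [if_pos hj]
      simp only [show ((1 : Fin 2) = 1) = True by simp, if_true]
      omega
    · rw [if_neg hj]
      simp only [show ((0 : Fin 2) = 1) = False by simp, if_false]
      omega
  · exact hL
where
  cf_mod' : 0 < L → cf h L (t % L) = cf h L t := by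
    intro hL
    unfold cf
    have e1 : t * h / L = (t % L) * h / L + t / L * h := by
      conv_lhs => rw [show t = t % L + t / L * L by have := Nat.mod_add_div' t L; omega]
      exact period_shift h L hL _ _
    have e2 : (t + 1) * h / L = (t % L + 1) * h / L + t / L * h := by
      conv_lhs => rw [show t + 1 = (t % L + 1) + t / L * L by have := Nat.mod_add_div' t L; omega]
      exact period_shift h L hL _ _
    omega

lemma mech_W (h L : ℕ) (hh : 0 < h) (hhL : h < L) (t n : ℕ) :
    W (mechList h L) t n = (t + n) * h / L - t * h / L := by
  unfold W
  rw [← cf_sum h L t n]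
  exact Finset.sum_congr rfl fun i _ => cw_mech h L hh hhL _

lemma mech_balanced (h L : ℕ) (hh : 0 < h) (hhL : h < L) : CircBalanced (mechList h L) := by
  intro u v hu hv hlen a
  have hL : 0 < L := by omega
  have hwlen : 0 < (mechList h L).length := by rw [mechList_length]; exact hL
  obtain ⟨hun, t1, hc1⟩ := factor_count hwlen hu
  obtain ⟨hvn, t2, hc2⟩ := factor_count hwlen hv
  rw [mech_W h L hh hhL] at hc1 hc2
  have hb1 := div_bounds h L t1 u.length hL
  have hb2 := div_bounds h L t2 v.length hL
  have hm1 := div_mono h L (show t1 ≤ t1 + u.length by omega)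
  have hm2 := div_mono h L (show t2 ≤ t2 + v.length by omega)
  have c01u := count01 u
  have c01v := count01 v
  rw [hlen] at hb1 hm1 hc1
  simp only [Set.mem_insert_iff, Set.mem_singleton_iff]
  rcases fin2 a with rfl | rfl <;> omega

lemma flatten_replicate_length {α : Type*} (p : ℕ) (u : List α) :
    (List.replicate p u).flatten.length = p * u.length := by
  induction p with
  | zero => simp
  | succ p ih => rw [List.replicate_succ, List.flatten_cons, List.length_append, ih]; ring

lemma flatten_replicate_getD {α : Type*} (p : ℕ) (u : List α) (d : α) (i : ℕ)
    (hi : i < p * u.length) :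
    (List.replicate p u).flatten.getD i d = u.getD (i % u.length) d := by
  induction p generalizing i with
  | zero => omega
  | succ p ih =>
    rw [Nat.succ_mul] at hi
    rw [List.replicate_succ, List.flatten_cons]
    by_cases hiu : i < u.length
    · rw [List.getD_append _ _ _ _ hiu, Nat.mod_eq_of_lt hiu]
    · rw [List.getD_append_right _ _ _ _ (by omega), ih _ (by omega)]
      congr 1
      conv_rhs => rw [show i = (i - u.length) + u.length by omega, Nat.add_mod_right]

lemma power_christoffel (k M p : ℕ) (hk : 0 < k) (hkM : k < M) (hp : 1 ≤ p) :
    (List.replicate p (christoffel k M)).flatten = mechList (p * (M - k)) (p * M) := by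
  have hM : 0 < M := by omega
  have hclen : (christoffel k M).length = M := by simp [christoffel]
  apply List.ext_getElem
  · rw [flatten_replicate_length, hclen, mechList_length]
  · intro i h1 h2
    have hi : i < p * M := by rwa [flatten_replicate_length, hclen] at h1
    rw [← List.getD_eq_getElem _ 0 h1, ← List.getD_eq_getElem _ 0 h2]
    rw [flatten_replicate_getD p _ _ i (by rw [hclen]; exact hi), hclen]
    rw [christoffel_eq_mech, mechList_getD _ _ _ (Nat.mod_lt _ hM),
      mechList_getD _ _ _ hi]
    have hred : ∀ a : ℕ, a * (p * (M - k)) / (p * M) = a * (M - k) / M := by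
      intro a
      rw [show a * (p * (M - k)) = p * (a * (M - k)) by ring, Nat.mul_div_mul_left _ _ hp]
    rw [hred, hred]
    have hjm := jump_mod (M - k) M hM i
    by_cases hj : i * (M - k) / M < (i + 1) * (M - k) / M
    · rw [if_pos hj, if_pos (by omega)]
    · rw [if_neg hj, if_neg (by omega)]

end Stmt7Aux

open Stmt7Aux in
theorem stmt_7 (w : List (Fin 2)) (h0 : (0 : Fin 2) ∈ w) (h1 : (1 : Fin 2) ∈ w) :
    CircBalanced w ↔
    ∃ k M p : ℕ, 0 < k ∧ k < M ∧ Nat.Coprime k (M - k) ∧ 1 ≤ p ∧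
      Conj w ((List.replicate p (christoffel k M)).flatten) := by
  have hL0 : 0 < w.length := List.length_pos_iff.mpr (by rintro rfl; simp at h0)
  have hh : 0 < w.count 1 := List.count_pos_iff.mpr h1
  have h0c : 0 < w.count 0 := List.count_pos_iff.mpr h0
  have hc01 := count01 w
  have hhL : w.count 1 < w.length := by omega
  constructor
  · intro hB
    have bal : ∀ t1 t2 n, n ≤ w.length → W w t1 n ≤ W w t2 n + 1 := by
      intro t1 t2 n hn
      obtain ⟨u, hu, hul, huc⟩ := window_factor w hL0 t1 n hn
      obtain ⟨v, hv, hvl, hvc⟩ := window_factor w hL0 t2 n hn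
      have := hB u v hu hv (by omega) 1
      simp only [Set.mem_insert_iff, Set.mem_singleton_iff] at this
      omega
    have lower : ∀ n, n ≤ w.length → ∀ t, n * w.count 1 / w.length ≤ W w t n := by
      intro n hn t
      by_contra hcon
      push_neg at hcon
      have ht' : W w (t % w.length) n < n * w.count 1 / w.length := by
        rw [W_mod]; exact hcon
      have hsum : ∑ s ∈ Finset.range w.length, W w s n = n * w.count 1 := by
        unfold W
        rw [Finset.sum_comm]
        have hin : ∀ i, ∑ s ∈ Finset.range w.length, cw w (s + i) = w.count 1 := by
          intro i
          rw [← sum_period w i]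
          unfold W
          exact Finset.sum_congr rfl fun s _ => by rw [Nat.add_comm]
        rw [Finset.sum_congr rfl fun i _ => hin i, Finset.sum_const, Finset.card_range,
          smul_eq_mul, Nat.mul_comm]
      have hlt : ∑ s ∈ Finset.range w.length, W w s n
          < ∑ _s ∈ Finset.range w.length, n * w.count 1 / w.length := by
        refine Finset.sum_lt_sum (fun s _ => ?_)
          ⟨t % w.length, Finset.mem_range.mpr (Nat.mod_lt _ hL0), ht'⟩
        have := bal s (t % w.length) n hn
        omega
      rw [hsum, Finset.sum_const, Finset.card_range, smul_eq_mul] at hlt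
      have hmul : n * w.count 1 / w.length * w.length ≤ n * w.count 1 :=
        Nat.div_mul_le_self _ _
      have : w.length * (n * w.count 1 / w.length) = n * w.count 1 / w.length * w.length := by
        ring
      omega
    obtain ⟨s, hs, hsmax⟩ := Finset.exists_max_image (Finset.range w.length)
      (fun t => (w.length : ℤ) * (W w 0 t) - t * w.count 1) ⟨0, Finset.mem_range.mpr hL0⟩
    have r_step : ∀ t : ℕ, (w.length : ℤ) * (W w 0 (t + w.length))
        - ((t + w.length : ℕ) : ℤ) * w.count 1
        = (w.length : ℤ) * (W w 0 t) - (t : ℤ) * w.count 1 := by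
      intro t
      have e : W w 0 (t + w.length) = W w 0 t + w.count 1 := by
        rw [W_add w 0 t w.length, Nat.zero_add, sum_period]
      rw [e]
      push_cast
      ring
    have r_per : ∀ q t : ℕ, (w.length : ℤ) * (W w 0 (t + q * w.length))
        - ((t + q * w.length : ℕ) : ℤ) * w.count 1
        = (w.length : ℤ) * (W w 0 t) - (t : ℤ) * w.count 1 := by
      intro q
      induction q with
      | zero => simp
      | succ q ih =>
        intro t
        rw [show t + (q + 1) * w.length = (t + q * w.length) + w.length by ring, r_step, ih]
    have hsmax' : ∀ t : ℕ, (w.length : ℤ) * (W w 0 t) - (t : ℤ) * w.count 1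
        ≤ (w.length : ℤ) * (W w 0 s) - (s : ℤ) * w.count 1 := by
      intro t
      have e : (w.length : ℤ) * (W w 0 t) - (t : ℤ) * w.count 1
          = (w.length : ℤ) * (W w 0 (t % w.length)) - ((t % w.length : ℕ) : ℤ) * w.count 1 := by
        conv_lhs => rw [show t = t % w.length + t / w.length * w.length by
          have := Nat.mod_add_div' t w.length; omega]
        exact r_per _ _
      rw [e]
      exact hsmax _ (Finset.mem_range.mpr (Nat.mod_lt _ hL0))
    have upper : ∀ i, W w s i ≤ i * w.count 1 / w.length := by
      intro i
      have hmax := hsmax' (s + i)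
      have e : W w 0 (s + i) = W w 0 s + W w s i := by
        rw [W_add w 0 s i, Nat.zero_add]
      rw [e] at hmax
      push_cast at hmax
      have h3 : (W w s i : ℤ) * w.length ≤ i * w.count 1 := by nlinarith
      have h4 : W w s i * w.length ≤ i * w.count 1 := by exact_mod_cast h3
      exact (Nat.le_div_iff_mul_le hL0).mpr h4
    have equal : ∀ i, i ≤ w.length → W w s i = i * w.count 1 / w.length :=
      fun i hi => le_antisymm (upper i) (lower i hi s)
    have hrot : w.rotate s = mechList (w.count 1) w.length := by
      apply List.ext_getElem
      · rw [List.length_rotate, mechList_length]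
      · intro i hi1 hi2
        have hiL : i < w.length := by rwa [List.length_rotate] at hi1
        have hcw : W w s i + cw w (s + i) = W w s (i + 1) := (W_succ w s i).symm
        rw [equal i (by omega), equal (i + 1) (by omega)] at hcw
        have hmono := div_mono (w.count 1) w.length (show i ≤ i + 1 by omega)
        have hcle := cw_le_one w (s + i)
        rw [← List.getD_eq_getElem _ 0 hi1, ← List.getD_eq_getElem _ 0 hi2]
        have hgd : (w.rotate s).getD i 0 = w.getD ((s + i) % w.length) 0 := by
          rw [List.getD_eq_getElem _ _ hi1, List.getElem_rotate,
            List.getD_eq_getElem _ _ (Nat.mod_lt _ hL0)]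
          congr 2
          ring
        rw [hgd, mechList_getD _ _ _ hiL]
        have hcwdef : cw w (s + i) = if w.getD ((s + i) % w.length) 0 = 1 then 1 else 0 := rfl
        by_cases hj : i * w.count 1 / w.length < (i + 1) * w.count 1 / w.length
        · rw [if_pos hj]
          have hone : cw w (s + i) = 1 := by omega
          rw [hcwdef] at hone
          by_cases he : w.getD ((s + i) % w.length) 0 = 1
          · exact he
          · rw [if_neg he] at hone; omega
        · rw [if_neg hj]
          have hzero : cw w (s + i) = 0 := by omega
          rw [hcwdef] at hzero
          by_cases he : w.getD ((s + i) % w.length) 0 = 1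
          · rw [if_pos he] at hzero; omega
          · rcases fin2 (w.getD ((s + i) % w.length) 0) with h' | h'
            · exact h'
            · exact absurd h' he
    have hd0 : 0 < Nat.gcd (w.count 1) w.length := Nat.gcd_pos_of_pos_left _ hh
    set d := Nat.gcd (w.count 1) w.length with hd
    have dh : d ∣ w.count 1 := Nat.gcd_dvd_left _ _
    have dL : d ∣ w.length := Nat.gcd_dvd_right _ _
    have hdiv : w.count 1 / d < w.length / d := Nat.div_lt_div_of_lt_of_dvd dL hhL
    have hhd0 : 0 < w.count 1 / d := Nat.div_pos (Nat.le_of_dvd hh dh) hd0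
    refine ⟨w.length / d - w.count 1 / d, w.length / d, d, by omega, by omega, ?_, hd0, ?_⟩
    · have hsub : w.length / d - (w.length / d - w.count 1 / d) = w.count 1 / d := by omega
      rw [hsub]
      have cop : Nat.Coprime (w.count 1 / d) (w.length / d) := Nat.coprime_div_gcd_div_gcd hd0
      exact (Nat.coprime_sub_self_left (by omega)).mpr cop.symm
    · rw [power_christoffel _ _ _ (by omega) (by omega) hd0]
      have e1 : w.length / d - (w.length / d - w.count 1 / d) = w.count 1 / d := by omega
      rw [e1]
      have e2 : d * (w.count 1 / d) = w.count 1 := Nat.mul_div_cancel' dh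
      have e3 : d * (w.length / d) = w.length := Nat.mul_div_cancel' dL
      rw [e2, e3, ← hrot]
      exact (conj_iff_rotate _ _).mpr ⟨s, rfl⟩
  · rintro ⟨k, M, p, hk, hkM, hcop, hp, hconj⟩
    rw [power_christoffel k M p hk hkM hp] at hconj
    have hb := mech_balanced (p * (M - k)) (p * M)
      (Nat.mul_pos hp (by omega))
      (Nat.mul_lt_mul_of_pos_left (by omega) hp)
    intro u v hu hv hlen a
    exact hb u v (cfactor_of_conj (conj_symm hconj) hu)
      (cfactor_of_conj (conj_symm hconj) hv) hlen a
end

section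
/- Every Christoffel word C(k, M−k) (with k, M−k coprime positive integers and M ≥ 2) has the form 0·Q·1, where Q is a palindrome. -/
lemma letterA (b M i : ℕ) (hbM : b < M) :
    (i * b / M < (i + 1) * b / M) ↔ M ≤ i * b % M + b := by
  have h : (i + 1) * b = i * b + b := by ring
  rw [h, Nat.add_div (by omega : 0 < M), Nat.mod_eq_of_lt hbM, Nat.div_eq_of_lt hbM]
  split <;> omega

lemma modpos (b M i : ℕ) (hcop : Nat.Coprime M b) (h1 : 1 ≤ i) (h2 : i < M) :
    1 ≤ i * b % M := by
  rcases Nat.eq_zero_or_pos (i * b % M) with h | h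
  · exfalso
    have hd : M ∣ i * b := Nat.dvd_of_mod_eq_zero h
    have := hcop.dvd_of_dvd_mul_right hd
    have := Nat.le_of_dvd (by omega) this
    omega
  · exact h

lemma symmres (b M i : ℕ) (hcop : Nat.Coprime M b) (h1 : 1 ≤ i) (h2 : i ≤ M - 2) (hM : 2 ≤ M) :
    (M - 1 - i) * b % M = M - (i + 1) * b % M := by
  set s := (i + 1) * b with hs
  set q := s / M with hq
  set r' := s % M with hr'
  have hsq : s = M * q + r' := (Nat.div_add_mod s M).symm
  have hrpos : 1 ≤ r' := modpos b M (i + 1) hcop (by omega) (by omega)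
  have hrlt : r' < M := Nat.mod_lt _ (by omega)
  have hb : 1 ≤ b := by
    rcases Nat.eq_zero_or_pos b with hb0 | hb0
    · subst hb0; simp [hs] at hr'; omega
    · exact hb0
  have hqb : q < b := by
    have hslt : s < M * b := by
      have hi : i + 1 < M := by omega
      calc s = (i + 1) * b := rfl
        _ < M * b := Nat.mul_lt_mul_of_lt_of_le hi (le_refl b) hb
    by_contra hc
    push_neg at hc
    have : M * b ≤ M * q := Nat.mul_le_mul_left M hc
    omega
  have hMq : M * (q + 1) ≤ M * b := Nat.mul_le_mul_left M (by omega)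
  have hMq' : M * q + M ≤ M * b := by rw [Nat.mul_add, mul_one] at hMq; omega
  have e1 : (M - 1 - i) * b = M * b - s := by
    have h' : M - 1 - i = M - (i + 1) := by omega
    rw [h', hs, Nat.sub_mul]
  have e2 : M * (b - q - 1) = M * b - M * q - M := by
    rw [Nat.mul_sub, Nat.mul_sub, mul_one]
  have e3 : (M - 1 - i) * b = M * (b - q - 1) + (M - r') := by omega
  rw [e3, Nat.mul_add_mod, Nat.mod_eq_of_lt (by omega)]

lemma lettersymm (b M i : ℕ) (hcop : Nat.Coprime M b) (hbM : b < M)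
    (h1 : 1 ≤ i) (h2 : i ≤ M - 2) (hM : 2 ≤ M) :
    (i * b / M < (i + 1) * b / M) ↔
      ((M - 1 - i) * b / M < (M - 1 - i + 1) * b / M) := by
  rw [letterA b M i hbM, letterA b M (M - 1 - i) hbM, symmres b M i hcop h1 h2 hM]
  set r := i * b % M with hr
  have hrpos : 1 ≤ r := modpos b M i hcop h1 (by omega)
  have hrlt : r < M := Nat.mod_lt _ (by omega)
  have hr'pos : 1 ≤ (i + 1) * b % M := modpos b M (i + 1) hcop (by omega) (by omega)
  have hr' : (i + 1) * b % M = (r + b) % M := by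
    conv_lhs => rw [show (i + 1) * b = i * b + b by ring]
    rw [Nat.add_mod, Nat.mod_eq_of_lt hbM, hr]
  rw [hr'] at hr'pos ⊢
  rcases Nat.lt_or_ge (r + b) M with h | h
  · rw [Nat.mod_eq_of_lt h] at hr'pos ⊢; omega
  · rw [Nat.mod_eq_sub_mod h, Nat.mod_eq_of_lt (by omega)] at hr'pos ⊢; omega

lemma mainlem (b M : ℕ) (hbpos : 0 < b) (hbM : b < M) (hcopM : Nat.Coprime M b) (hM : 2 ≤ M) :
    ∃ Q : List (Fin 2), Q.Palindrome ∧
      (List.range M).map (fun i => if i * b / M < (i + 1) * b / M then (1 : Fin 2) else 0)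
        = 0 :: (Q ++ [1]) := by
  set f : ℕ → Fin 2 := fun i => if i * b / M < (i + 1) * b / M then (1 : Fin 2) else 0 with hf
  obtain ⟨m, rfl⟩ : ∃ m, M = m + 2 := ⟨M - 2, by omega⟩
  refine ⟨(List.range m).map (fun j => f (j + 1)), ?_, ?_⟩
  · apply List.Palindrome.of_reverse_eq
    apply List.ext_getElem (by simp)
    intro n h1 h2
    simp only [List.length_reverse, List.length_map, List.length_range] at h1 h2
    rw [List.getElem_reverse]
    simp only [List.getElem_map, List.getElem_range, List.length_map, List.length_range]
    have key := lettersymm b (m + 2) (n + 1) hcopM hbM (by omega) (by omega) hM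
    have hidx : m - 1 - n + 1 = m + 2 - 1 - (n + 1) := by omega
    rw [hidx]
    simp only [hf]
    exact if_congr key.symm rfl rfl
  · have hzero : f 0 = 0 := by
      simp [hf, Nat.div_eq_of_lt hbM]
    have hlast : f (m + 1) = 1 := by
      have hc : (m + 1) * b / (m + 2) < (m + 1 + 1) * b / (m + 2) := by
        rw [letterA b (m + 2) (m + 1) hbM]
        obtain ⟨c, rfl⟩ : ∃ c, b = c + 1 := ⟨b - 1, by omega⟩
        have hcm : c ≤ m := by omega
        have e' : (m + 1) * (c + 1) + c = (m + 2) * c + (m + 1) := by ring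
        have e : (m + 1) * (c + 1) = (m + 2) * c + (m + 1 - c) := by omega
        rw [e, Nat.mul_add_mod, Nat.mod_eq_of_lt (by omega)]
        omega
      simp only [hf]
      rw [if_pos hc]
    have : List.range (m + 2) = 0 :: (List.range m).map Nat.succ ++ [m + 1] := by
      rw [List.range_succ, List.range_succ_eq_map]
    rw [this]
    simp [hzero, hlast, List.map_append, List.map_map, Function.comp, Nat.succ_eq_add_one]

theorem stmt_8 (k M : ℕ) (hk : 0 < k) (hkM : k < M)
    (hcop : Nat.Coprime k (M - k)) (hM : 2 ≤ M) :
    ∃ Q : List (Fin 2), Q.Palindrome ∧ christoffel k M = 0 :: (Q ++ [1]) := by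
  have hcopM : Nat.Coprime M (M - k) := by
    have h2 : Nat.Coprime (k + (M - k)) (M - k) := Nat.coprime_add_self_left.mpr hcop
    rwa [show k + (M - k) = M by omega] at h2
  have := mainlem (M - k) M (by omega) (by omega) hcopM hM
  simpa [christoffel] using this
end

section
/- A Christoffel word w = C(k, M−k) is the unique word in its cyclic conjugacy class [w] having the form 0·Q·1 with Q a palindrome. -/
lemma aux_div_iff (b M i : ℕ) (hbM : b < M) :
    i * b / M < (i + 1) * b / M ↔ (i + 1) * b % M < b := by
  have hM : 0 < M := by omega
  set q := i * b / M with hq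
  have hdm : M * q + i * b % M = i * b := Nat.div_add_mod _ _
  set r := i * b % M with hr
  have hrM : r < M := Nat.mod_lt _ hM
  have he : (i + 1) * b = M * q + (r + b) := by ring_nf; omega
  rw [he, Nat.mul_add_div hM, Nat.mul_add_mod]
  rcases lt_or_ge (r + b) M with h | h
  · rw [Nat.div_eq_of_lt h, Nat.mod_eq_of_lt h]
    omega
  · have h2 : r + b = (r + b - M) + M := by omega
    have h3 : r + b - M < M := by omega
    rw [h2, Nat.add_div_right _ hM, Nat.add_mod_right, Nat.div_eq_of_lt h3,
      Nat.mod_eq_of_lt h3]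
    omega

lemma aux_mod_sub (x M : ℕ) (h1 : M ≤ x) (h2 : x < 2 * M) : x % M = x - M := by
  rw [Nat.mod_eq_sub_mod h1, Nat.mod_eq_of_lt (by omega)]

lemma aux_exists_inv (b M t : ℕ) (hcop : Nat.Coprime b M) (hM : 2 ≤ M) (ht : t < M) :
    ∃ i, i < M ∧ i * b % M = t := by
  haveI : NeZero M := ⟨by omega⟩
  refine ⟨((b : ZMod M)⁻¹ * t).val, ZMod.val_lt _, ?_⟩
  have h1 : (b : ZMod M) * (b : ZMod M)⁻¹ = 1 := ZMod.coe_mul_inv_eq_one b hcop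
  have h2 : ((((b : ZMod M)⁻¹ * t).val * b : ℕ) : ZMod M) = (t : ZMod M) := by
    push_cast
    rw [ZMod.natCast_val, ZMod.cast_id]
    rw [mul_comm, ← mul_assoc, h1, one_mul]
  have := congrArg ZMod.val h2
  rwa [ZMod.val_natCast, ZMod.val_natCast, Nat.mod_eq_of_lt ht] at this

lemma aux_main (b M s : ℕ) (hb : 0 < b) (hbM : b < M)
    (hcop : Nat.Coprime (M - b) b)
    (hs1 : s < b) (hs2 : s + b < M)
    (hc : ∀ t, 0 < t → t < M → t ≠ M - b →
      ((s + b + t) % M < b ↔ (s + M - t) % M < b)) :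
    s = 0 := by
  by_contra hs
  have hs0 : 1 ≤ s := by omega
  have hb2 : 2 ≤ b := by omega
  have hk2 : 2 ≤ M - b := by omega
  have h1 := hc 1 (by omega) (by omega) (by omega)
  have hr1 : (s + M - 1) % M = s - 1 := by
    rw [aux_mod_sub _ _ (by omega) (by omega)]; omega
  rw [hr1] at h1
  have h1' : (s + b + 1) % M < b := h1.mpr (by omega)
  have hsk : s + b + 1 = M := by
    rcases lt_or_ge (s + b + 1) M with h | h
    · rw [Nat.mod_eq_of_lt h] at h1'; omega
    · omega
  have h2 := hc (M - 1) (by omega) (by omega) (by omega)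
  have hl2 : (s + b + (M - 1)) % M = s + b - 1 := by
    rw [aux_mod_sub _ _ (by omega) (by omega)]; omega
  have hr2 : (s + M - (M - 1)) % M = s + 1 := by
    rw [Nat.mod_eq_of_lt (by omega)]; omega
  rw [hl2, hr2] at h2
  have hx : ¬ (s + 1 < b) := fun h => by omega
  have hsb : s + 1 = b := by omega
  have hMb : M - b = b := by omega
  rw [hMb] at hcop
  have hg : Nat.gcd b b = 1 := hcop
  rw [Nat.gcd_self] at hg
  omega

theorem stmt_9 (k M : ℕ) (hk : 0 < k) (hkM : k < M)
    (hcop : Nat.Coprime k (M - k))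
    (w' : List (Fin 2)) (hconj : Conj (christoffel k M) w')
    (Q : List (Fin 2)) (hQ : Q.Palindrome) (hform : w' = 0 :: (Q ++ [1])) :
    w' = christoffel k M := by
  have hb : 0 < M - k := by omega
  have hbM : M - k < M := by omega
  have hM2 : 2 ≤ M := by omega
  have hcopbM : Nat.Coprime (M - k) M := by
    have h1 : Nat.Coprime (M - k) k := hcop.symm
    have h2 : M = k + (M - k) := by omega
    have h3 : Nat.Coprime (M - k) (k + (M - k)) := Nat.coprime_add_self_right.mpr h1
    rwa [← h2] at h3
  have hclen : (christoffel k M).length = M := by simp [christoffel]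
  have hchris : ∀ m, m < M → (christoffel k M)[m]? =
      some (if (m + 1) * (M - k) % M < M - k then (1 : Fin 2) else 0) := by
    intro m hm
    simp only [christoffel, List.getElem?_map, List.getElem?_range hm, Option.map_some]
    simp only [aux_div_iff (M - k) M m hbM]
  obtain ⟨x, y, hxy, hyx⟩ := hconj
  set j := x.length with hj
  have hxylen : M = j + y.length := by
    have := congrArg List.length hxy
    rw [hclen, List.length_append] at this
    exact this
  have hlen' : w'.length = M := by
    rw [hyx, List.length_append]
    omega
  have hrot : ∀ i, i < M → w'[i]? = (christoffel k M)[(i + j) % M]? := by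
    intro i hi
    rw [hyx, hxy]
    rcases lt_or_ge i y.length with h | h
    · rw [List.getElem?_append_left h]
      have hm : (i + j) % M = i + j := Nat.mod_eq_of_lt (by omega)
      rw [hm, List.getElem?_append_right (by omega : x.length ≤ i + j),
        show i + j - x.length = i from by omega]
    · rw [List.getElem?_append_right h]
      have hm : (i + j) % M = i + j - M := aux_mod_sub _ _ (by omega) (by omega)
      rw [hm, List.getElem?_append_left (by omega : i + j - M < x.length),
        show i - y.length = i + j - M from by omega]
  have hval : ∀ i, i < M → w'[i]? =
      some (if (i + j + 1) * (M - k) % M < M - k then (1 : Fin 2) else 0) := by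
    intro i hi
    rw [hrot i hi, hchris _ (Nat.mod_lt _ (by omega))]
    have hcong : ((i + j) % M + 1) * (M - k) % M = (i + j + 1) * (M - k) % M := by
      have : ((i + j) % M + 1) * (M - k) ≡ (i + j + 1) * (M - k) [MOD M] :=
        (Nat.ModEq.add_right 1 (Nat.mod_modEq (i + j) M)).mul_right _
      exact this
    rw [hcong]
  have hQlen : Q.length = M - 2 := by
    have := congrArg List.length hform
    rw [hlen'] at this
    simp at this
    omega
  -- condition (a)
  have ha : ¬ ((j + 1) * (M - k) % M < M - k) := by
    have h0 : w'[0]? = some 0 := by rw [hform, List.getElem?_cons_zero]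
    have h1 := hval 0 (by omega)
    rw [h0, show 0 + j + 1 = j + 1 from by omega] at h1
    intro hcond
    rw [if_pos hcond] at h1
    exact absurd h1 (by decide)
  -- condition (b)
  have hbb : (M + j) * (M - k) % M < M - k := by
    have h0 : w'[M - 1]? = some 1 := by
      rw [hform, show M - 1 = (M - 2) + 1 from by omega, List.getElem?_cons_succ,
        List.getElem?_append_right (by omega : Q.length ≤ M - 2),
        show M - 2 - Q.length = 0 from by omega]
      rfl
    have h1 := hval (M - 1) (by omega)
    rw [h0, show M - 1 + j + 1 = M + j from by omega] at h1
    by_contra hcond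
    rw [if_neg hcond] at h1
    exact absurd h1 (by decide)
  set s := j * (M - k) % M with hs
  have hmeq : j * (M - k) ≡ s [MOD M] := (Nat.mod_modEq _ _).symm
  have hsM : s < M := Nat.mod_lt _ (by omega)
  have hs1 : s < M - k := by
    rw [show (M + j) * (M - k) = j * (M - k) + (M - k) * M from by ring,
      Nat.add_mul_mod_self_right] at hbb
    rw [hs]
    exact hbb
  have he : (j + 1) * (M - k) % M = (s + (M - k)) % M := by
    have h2 : (j + 1) * (M - k) ≡ s + (M - k) [MOD M] := by
      rw [show (j + 1) * (M - k) = j * (M - k) + (M - k) from by ring]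
      exact Nat.ModEq.add_right _ hmeq
    exact h2
  have hs2 : s + (M - k) < M := by
    by_contra h
    have hms := aux_mod_sub (s + (M - k)) M (by omega) (by omega)
    omega
  -- condition (c)
  have hc : ∀ t, 0 < t → t < M → t ≠ M - (M - k) →
      ((s + (M - k) + t) % M < M - k ↔ (s + M - t) % M < M - k) := by
    intro t ht0 htM htk
    obtain ⟨i, hiM, hti⟩ := aux_exists_inv (M - k) M t hcopbM hM2 htM
    have hti' : i * (M - k) ≡ t [MOD M] := by
      rw [← hti]; exact (Nat.mod_modEq _ _).symm
    have hi1 : 1 ≤ i := by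
      rcases Nat.eq_zero_or_pos i with h | h
      · rw [h] at hti; simp at hti; omega
      · exact h
    have hi2 : i ≤ M - 2 := by
      by_contra h
      have hieq : i = M - 1 := by omega
      have hval1 : (M - 1) * (M - k) % M = k := by
        have he2 : (M - 1) * (M - k) = k + (M - k - 1) * M := by
          zify [show 1 ≤ M from by omega, show k ≤ M from by omega,
            show 1 ≤ M - k from hb]
          ring
        rw [he2, Nat.add_mul_mod_self_right, Nat.mod_eq_of_lt (by omega)]
      rw [hieq, hval1] at hti
      omega
    have hw1 : w'[i]? = Q[i - 1]? := by
      conv_lhs => rw [hform, show i = (i - 1) + 1 from by omega]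
      rw [List.getElem?_cons_succ, List.getElem?_append_left (by omega : i - 1 < Q.length)]
    have hw2 : w'[M - 1 - i]? = Q[M - 2 - i]? := by
      conv_lhs => rw [hform, show M - 1 - i = (M - 2 - i) + 1 from by omega]
      rw [List.getElem?_cons_succ,
        List.getElem?_append_left (by omega : M - 2 - i < Q.length)]
    have hpal : Q[i - 1]? = Q[M - 2 - i]? := by
      conv_lhs => rw [← hQ.reverse_eq]
      rw [List.getElem?_reverse (by omega : i - 1 < Q.length), hQlen,
        show M - 2 - 1 - (i - 1) = M - 2 - i from by omega]
    have h1 := hval i (by omega)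
    have h2 := hval (M - 1 - i) (by omega)
    rw [hw1, hpal] at h1
    rw [hw2] at h2
    have h3 := Option.some.inj (h1.symm.trans h2)
    have e1 : (i + j + 1) * (M - k) % M = (s + (M - k) + t) % M := by
      have : (i + j + 1) * (M - k) ≡ s + (M - k) + t [MOD M] := by
        rw [show (i + j + 1) * (M - k) = j * (M - k) + (M - k) + i * (M - k) from by ring]
        exact (hmeq.add_right (M - k)).add hti'
      exact this
    have e2 : (M - 1 - i + j + 1) * (M - k) % M = (s + M - t) % M := by
      rw [show M - 1 - i + j + 1 = (M - i) + j from by omega]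
      have m2 : (M - i) * (M - k) ≡ M - t [MOD M] := by
        apply Nat.ModEq.add_right_cancel' t
        calc (M - i) * (M - k) + t
            ≡ (M - i) * (M - k) + i * (M - k) [MOD M] := Nat.ModEq.add_left _ hti'.symm
          _ = M * (M - k) := by
              rw [← Nat.add_mul, Nat.sub_add_cancel (by omega : i ≤ M)]
          _ ≡ M - t + t [MOD M] := by
              rw [Nat.sub_add_cancel (by omega : t ≤ M)]
              show M * (M - k) % M = M % M
              rw [Nat.mul_mod_right, Nat.mod_self]
      have hfin : (M - i + j) * (M - k) ≡ (M - t) + s [MOD M] := by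
        rw [Nat.add_mul]
        exact m2.add hmeq
      rw [show s + M - t = (M - t) + s from by omega]
      exact hfin
    rw [e1, e2] at h3
    constructor <;> intro h5
    · by_contra hB
      rw [if_pos h5, if_neg hB] at h3
      exact absurd h3 (by decide)
    · by_contra hB
      rw [if_neg hB, if_pos h5] at h3
      exact absurd h3 (by decide)
  have hs0 : s = 0 := by
    apply aux_main (M - k) M s hb hbM ?_ hs1 hs2 hc
    rw [show M - (M - k) = k from by omega]
    exact hcop
  have hdvd : M ∣ j := by
    have h1 : M ∣ j * (M - k) := Nat.dvd_of_mod_eq_zero hs0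
    exact (hcopbM.symm).dvd_of_dvd_mul_right h1
  obtain ⟨c, hcc⟩ := hdvd
  apply List.ext_getElem?
  intro n
  rcases lt_or_ge n M with h | h
  · rw [hrot n h, hcc,
      show (n + M * c) % M = n from by rw [Nat.add_mul_mod_self_left, Nat.mod_eq_of_lt h]]
  · rw [List.getElem?_eq_none (by omega : w'.length ≤ n),
      List.getElem?_eq_none (by omega : (christoffel k M).length ≤ n)]
end

section
/- The circular word [0 0 1 2 1] over the ternary alphabet {0,1,2} has abelian complexity ρ_n ≤ 3 for all 1 ≤ n ≤ 5, but it is not balanced. -/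
lemma cfactor_infix_double (u : List (Fin 3)) (h : CFactor u ([0, 0, 1, 2, 1] : List (Fin 3))) :
    u <:+: ([0, 0, 1, 2, 1, 0, 0, 1, 2, 1] : List (Fin 3)) := by
  obtain ⟨w', ⟨x, y, hw, hw'⟩, hinf⟩ := h
  refine hinf.trans ?_
  have hbig : x ++ (y ++ x) ++ y = ([0, 0, 1, 2, 1] ++ [0, 0, 1, 2, 1] : List (Fin 3)) := by
    rw [hw]; simp
  rw [hw']
  exact ⟨x, y, hbig⟩

lemma circAb_bound (n : ℕ) (h1 : 1 ≤ n) :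
    circAb n ([0, 0, 1, 2, 1] : List (Fin 3)) ≤
      (((List.range (11 - n)).map (fun k => fun a : Fin 3 =>
        ((([0, 0, 1, 2, 1, 0, 0, 1, 2, 1] : List (Fin 3)).drop k).take n).count a)).toFinset).card := by
  have hsub : circSpec n ([0, 0, 1, 2, 1] : List (Fin 3)) ⊆
      ↑(((List.range (11 - n)).map (fun k => fun a : Fin 3 =>
        ((([0, 0, 1, 2, 1, 0, 0, 1, 2, 1] : List (Fin 3)).drop k).take n).count a)).toFinset) := by
    rintro p ⟨u, hcf, hlen, rfl⟩
    obtain ⟨s, t, hst⟩ := cfactor_infix_double u hcf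
    have hl : s.length + (u.length + t.length) = 10 := by
      have := congrArg List.length hst
      simpa using this
    have hu : u = ((([0, 0, 1, 2, 1, 0, 0, 1, 2, 1] : List (Fin 3)).drop s.length).take n) := by
      rw [← hst, List.append_assoc, List.drop_left, ← hlen, List.take_left]
    simp only [Finset.mem_coe, List.mem_toFinset, List.mem_map, List.mem_range]
    exact ⟨s.length, by omega, by rw [← hu]⟩
  have := Set.ncard_le_ncard hsub (Finset.finite_toSet _)
  rwa [Set.ncard_coe_finset] at this

theorem stmt_13 :
    (∀ n : ℕ, 1 ≤ n → n ≤ 5 → circAb n ([0, 0, 1, 2, 1] : List (Fin 3)) ≤ 3) ∧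
    ¬ CircBalanced ([0, 0, 1, 2, 1] : List (Fin 3)) := by
  constructor
  · intro n h1 h5
    refine (circAb_bound n h1).trans ?_
    interval_cases n <;> decide
  · intro h
    have := h [0, 0] [1, 2]
      ⟨[0, 0, 1, 2, 1], ⟨[0, 0, 1, 2, 1], [], by simp, by simp⟩, ⟨[], [1, 2, 1], rfl⟩⟩
      ⟨[0, 0, 1, 2, 1], ⟨[0, 0, 1, 2, 1], [], by simp, by simp⟩, ⟨[0, 0], [1], rfl⟩⟩
      rfl 0
    simp [List.count_cons, Set.mem_insert_iff] at this
end

section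
/- Let φ be the map on binary words with an even number of 0's that replaces every letter 1 by 2 and replaces every even-numbered occurrence of 0 (the 2nd, 4th, 6th, ... occurrence of 0) by 1. If w is a binary word with an even number of 0's, then for every integer p ≥ 1, φ(w^p) = φ(w)^p. -/
/-- Auxiliary scan for `phi`: the Boolean records whether the next occurrence
of `0` is odd-numbered. -/
def phiAux : Bool → List (Fin 2) → List (Fin 3)
  | _, [] => []
  | b, a :: t =>
    if a = 0 then (if b then (0 : Fin 3) else 1) :: phiAux (!b) t
    else (2 : Fin 3) :: phiAux b t

/-- `phi` replaces each `1` by `2` and each even-numbered occurrence of `0` by `1`. -/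
def phi (w : List (Fin 2)) : List (Fin 3) := phiAux true w

lemma phiAux_append (u : List (Fin 2)) (b : Bool) (v : List (Fin 2)) :
    phiAux b (u ++ v) = phiAux b u ++ phiAux (if Even (u.count 0) then b else !b) v := by
  induction u generalizing b with
  | nil => simp [phiAux]
  | cons a t ih =>
    by_cases ha : a = 0
    · subst ha
      simp only [List.cons_append, phiAux, if_pos rfl, ih, List.count_cons_self,
        Nat.even_add_one]
      by_cases h : Even (t.count 0) <;> simp [h, ih]
    · simp [phiAux, ha, ih, List.count_cons, List.cons_append]

theorem stmt_14 (w : List (Fin 2)) (heven : Even (w.count 0))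
    (p : ℕ) (hp : 1 ≤ p) :
    phi ((List.replicate p w).flatten) = (List.replicate p (phi w)).flatten := by
  clear hp
  induction p with
  | zero => simp [phi, phiAux]
  | succ n ih =>
    rw [List.replicate_succ, List.replicate_succ, List.flatten_cons, List.flatten_cons,
      ← ih]
    unfold phi
    rw [phiAux_append, if_pos heven]
end

section
/- Let C(k, M−k) be a Christoffel word with k even, and let φ replace each 1 by 2 and each even-numbered occurrence of 0 by 1. Then the circular word [φ(C(k, M−k))] over the ternary alphabet {0,1,2} is balanced. -/
namespace Stmt15Aux

/-! Auxiliary machinery. -/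

/-- The binary letter at position `j` of the (periodized) Christoffel word of slope `n/M`. -/
def Wf (n M j : ℕ) : Fin 2 := if j * n / M < (j + 1) * n / M then 1 else 0

/-- The ternary letter at position `j` of the image under `phi`. -/
def Vf (n M j : ℕ) : Fin 3 :=
  if j * n / M < (j + 1) * n / M then 2
  else if (j - j * n / M) % 2 = 0 then 0 else 1

/-- Counting function: `Phi a p` counts occurrences of letter `a` among the first
`p` letters of the periodized ternary word. -/
def Phi (n M : ℕ) (a : Fin 3) (p : ℕ) : ℕ :=
  if a = 2 then p * n / M
  else if a = 0 then (p - p * n / M + 1) / 2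
  else (p - p * n / M) / 2

section ListLemmas

variable {α : Type*}

lemma mapRange_add (f : ℕ → α) (A B : ℕ) :
    (List.range (A + B)).map f
      = (List.range A).map f ++ (List.range B).map (fun j => f (j + A)) := by
  rw [List.range_add, List.map_append, List.map_map]
  simp [Function.comp_def, Nat.add_comm]

lemma infix_shape (f : ℕ → α) (M : ℕ) (u : List α)
    (h : u <:+: (List.range M).map f) :
    ∃ p, u = (List.range u.length).map (fun j => f (j + p)) := by
  obtain ⟨s, t, hst⟩ := h
  refine ⟨s.length, ?_⟩
  have hlen : s.length + (u.length + t.length) = M := by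
    have := congrArg List.length hst
    simp only [List.length_append, List.length_map, List.length_range] at this
    omega
  rw [← hlen, mapRange_add, List.append_assoc] at hst
  obtain ⟨-, h2⟩ := List.append_inj hst (by simp)
  rw [mapRange_add] at h2
  obtain ⟨h3, -⟩ := List.append_inj h2 (by simp)
  exact h3

lemma rot_shape (f : ℕ → α) (A B : ℕ) (hper : ∀ j, f (j + (A + B)) = f j) :
    (List.range B).map (fun j => f (j + A)) ++ (List.range A).map f
      = (List.range (A + B)).map (fun j => f (j + A)) := by
  rw [Nat.add_comm A B, mapRange_add]
  congr 1
  refine List.map_congr_left fun j _ => ?_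
  have h1 : j + B + A = j + (B + A) := by omega
  rw [h1, Nat.add_comm B A, hper]

lemma cfactor_shape (f : ℕ → α) (M : ℕ) (hper : ∀ j, f (j + M) = f j)
    (u : List α) (h : CFactor u ((List.range M).map f)) :
    ∃ p, u = (List.range u.length).map (fun j => f (j + p)) := by
  obtain ⟨w', ⟨x, y, hxy, rfl⟩, hinf⟩ := h
  have hlen : x.length + y.length = M := by
    have := congrArg List.length hxy
    simp only [List.length_append, List.length_map, List.length_range] at this
    omega
  rw [← hlen, mapRange_add] at hxy
  obtain ⟨hx, hy⟩ := List.append_inj hxy (by simp)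
  have hrot : y ++ x
      = (List.range (x.length + y.length)).map (fun j => f (j + x.length)) := by
    calc y ++ x
        = (List.range y.length).map (fun j => f (j + x.length))
            ++ (List.range x.length).map f := by rw [hx, hy]
      _ = _ := rot_shape f x.length y.length (by rw [hlen]; exact hper)
  rw [hrot] at hinf
  obtain ⟨p, hp⟩ := infix_shape _ _ u hinf
  refine ⟨p + x.length, ?_⟩
  nth_rewrite 1 [hp]
  refine List.map_congr_left fun j _ => ?_
  rw [Nat.add_assoc]

lemma phiAux_cons_zero (b : Bool) (t : List (Fin 2)) :
    phiAux b ((0 : Fin 2) :: t) = (if b then (0 : Fin 3) else 1) :: phiAux (!b) t := rfl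

lemma phiAux_cons_one (b : Bool) (t : List (Fin 2)) :
    phiAux b ((1 : Fin 2) :: t) = (2 : Fin 3) :: phiAux b t := rfl

end ListLemmas

section Arith

variable (n M : ℕ)

lemma F_mono (hpq : p ≤ q) : p * n / M ≤ q * n / M :=
  Nat.div_le_div_right (Nat.mul_le_mul_right _ hpq)

lemma F_le (hM : 0 < M) (hn : n ≤ M) (p : ℕ) : p * n / M ≤ p := by
  calc p * n / M ≤ p * M / M := Nat.div_le_div_right (Nat.mul_le_mul_left _ hn)
    _ = p := Nat.mul_div_cancel p hM

lemma F_step_le (hM : 0 < M) (hn : n ≤ M) (p : ℕ) :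
    (p + 1) * n / M ≤ p * n / M + 1 := by
  calc (p + 1) * n / M = (p * n + n) / M := by ring_nf
    _ ≤ (p * n + M) / M := Nat.div_le_div_right (by omega)
    _ = p * n / M + 1 := Nat.add_div_right _ hM

lemma F_add_le (hM : 0 < M) (hn : n ≤ M) (p ℓ : ℕ) :
    (p + ℓ) * n / M ≤ p * n / M + ℓ := by
  calc (p + ℓ) * n / M = (p * n + ℓ * n) / M := by ring_nf
    _ ≤ (p * n + ℓ * M) / M := Nat.div_le_div_right (by
        have : ℓ * n ≤ ℓ * M := Nat.mul_le_mul_left _ hn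
        omega)
    _ = p * n / M + ℓ := Nat.add_mul_div_right _ _ hM

lemma F_add_ge (p ℓ : ℕ) : p * n / M + ℓ * n / M ≤ (p + ℓ) * n / M := by
  calc p * n / M + ℓ * n / M ≤ (p * n + ℓ * n) / M := Nat.add_div_le_add_div _ _ _
    _ = (p + ℓ) * n / M := by ring_nf

lemma F_add_le' (hM : 0 < M) (p ℓ : ℕ) :
    (p + ℓ) * n / M ≤ p * n / M + ℓ * n / M + 1 := by
  have h : (p + ℓ) * n = p * n + ℓ * n := by ring
  rw [h, Nat.add_div hM]
  split <;> omega

end Arith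

section Words

lemma phiAux_eq (n M : ℕ) (hM : 0 < M) (hn : n ≤ M) :
    ∀ (ℓ p : ℕ) (b : Bool), (b = true ↔ (p - p * n / M) % 2 = 0) →
      phiAux b ((List.range ℓ).map (fun j => Wf n M (j + p)))
        = (List.range ℓ).map (fun j => Vf n M (j + p)) := by
  intro ℓ
  induction ℓ with
  | zero => intro p b _; simp [phiAux]
  | succ m ih =>
    intro p b hb
    rw [List.range_succ_eq_map, List.map_cons, List.map_cons, List.map_map, List.map_map]
    have hcW : ((fun j => Wf n M (j + p)) ∘ Nat.succ) = fun j => Wf n M (j + (p + 1)) := by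
      funext j; simp only [Function.comp]; congr 1; omega
    have hcV : ((fun j => Vf n M (j + p)) ∘ Nat.succ) = fun j => Vf n M (j + (p + 1)) := by
      funext j; simp only [Function.comp]; congr 1; omega
    rw [hcW, hcV, Nat.zero_add]
    have hle : p * n / M ≤ (p + 1) * n / M := F_mono n M (Nat.le_succ p)
    have hstep := F_step_le n M hM hn p
    have hFle := F_le n M hM hn p
    by_cases hj : p * n / M < (p + 1) * n / M
    · have hW : Wf n M p = 1 := by simp [Wf, hj]
      have hV : Vf n M p = 2 := by simp [Vf, hj]
      rw [hW, hV, phiAux_cons_one]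
      congr 1
      apply ih (p + 1) b
      have hEq : (p + 1) - (p + 1) * n / M = p - p * n / M := by omega
      rw [hEq]; exact hb
    · have hF : (p + 1) * n / M = p * n / M := le_antisymm (not_lt.1 hj) hle
      have hW : Wf n M p = 0 := by simp [Wf, hj]
      have hV : Vf n M p = (if (p - p * n / M) % 2 = 0 then 0 else 1) := by
        simp [Vf, hj]
      rw [hW, hV, phiAux_cons_zero]
      by_cases hpar : (p - p * n / M) % 2 = 0
      · have hbt : b = true := hb.mpr hpar
        subst hbt
        rw [if_pos rfl, if_pos hpar]
        congr 1
        apply ih (p + 1)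
        simp only [Bool.not_true, Bool.false_eq_true, false_iff]
        omega
      · have hbf : b = false := by
          cases b
          · rfl
          · exact absurd (hb.mp rfl) hpar
        subst hbf
        rw [if_neg (by simp), if_neg hpar]
        congr 1
        apply ih (p + 1)
        simp only [Bool.not_false, true_iff]
        omega

lemma count_step (n M : ℕ) (hM : 0 < M) (hn : n ≤ M) (a : Fin 3) (q : ℕ) :
    Phi n M a (q + 1) = Phi n M a q + List.count a [Vf n M q] := by
  have h1 : q * n / M ≤ (q + 1) * n / M := F_mono n M (Nat.le_succ q)
  have h2 := F_step_le n M hM hn q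
  have h3 := F_le n M hM hn q
  by_cases hj : q * n / M < (q + 1) * n / M
  · have hV : Vf n M q = 2 := by simp [Vf, hj]
    fin_cases a <;>
      simp only [Phi, hV, List.count_singleton, if_true, if_false] <;>
      simp <;> omega
  · have hF : (q + 1) * n / M = q * n / M := le_antisymm (not_lt.1 hj) h1
    by_cases hpar : (q - q * n / M) % 2 = 0
    · have hV : Vf n M q = 0 := by simp [Vf, hj, hpar]
      fin_cases a <;> simp [Phi, hV, hF] <;> omega
    · have hV : Vf n M q = 1 := by simp [Vf, hj, hpar]
      fin_cases a <;> simp [Phi, hV, hF] <;> omega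

lemma count_eq (n M : ℕ) (hM : 0 < M) (hn : n ≤ M) (a : Fin 3) :
    ∀ (ℓ p : ℕ),
      Phi n M a (p + ℓ)
        = Phi n M a p + ((List.range ℓ).map (fun j => Vf n M (j + p))).count a := by
  intro ℓ
  induction ℓ with
  | zero => intro p; simp
  | succ m ih =>
    intro p
    rw [List.range_succ, List.map_append, List.count_append]
    have hstep := count_step n M hM hn a (p + m)
    have h1 : p + (m + 1) = (p + m) + 1 := by omega
    rw [h1, hstep, ih p]
    have h2 : (List.map (fun j => Vf n M (j + p)) [m]) = [Vf n M (p + m)] := by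
      simp [Nat.add_comm]
    rw [h2]
    omega

lemma Vf_per (k M : ℕ) (hk : 0 < k) (hkM : k < M) (hke : Even k) (j : ℕ) :
    Vf (M - k) M (j + M) = Vf (M - k) M j := by
  have hM : 0 < M := hk.trans hkM
  set n := M - k with hn
  have hFper : ∀ i : ℕ, (i + M) * n / M = i * n / M + n := by
    intro i
    have : (i + M) * n = i * n + n * M := by ring
    rw [this, Nat.add_mul_div_right _ _ hM]
  have h1 := hFper j
  have h2 : (j + M + 1) * n / M = (j + 1) * n / M + n := by
    have := hFper (j + 1); rw [← this]; congr 1; ring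
  have hle := F_le n M hM (Nat.sub_le _ _) j
  obtain ⟨c, hc⟩ := hke
  simp only [Vf, h1, h2, Nat.add_lt_add_iff_right]
  have h3 : j + M - (j * n / M + n) = j - j * n / M + k := by omega
  rw [h3]
  have h4 : (j - j * n / M + k) % 2 = (j - j * n / M) % 2 := by omega
  rw [h4]

end Words

end Stmt15Aux

open Stmt15Aux in
theorem stmt_15 (k M : ℕ) (hk : 0 < k) (hkM : k < M)
    (hcop : Nat.Coprime k (M - k)) (hke : Even k) :
    CircBalanced (phi (christoffel k M)) := by
  intro u v hu hv hlen a
  set n := M - k with hndef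
  have hM : 0 < M := hk.trans hkM
  have hn : n ≤ M := Nat.sub_le _ _
  have hphi : phi (christoffel k M) = (List.range M).map (Vf n M) := by
    have hchr : christoffel k M = (List.range M).map (fun j => Wf n M (j + 0)) := by
      simp only [christoffel, Wf, Nat.add_zero, hndef]
    rw [phi, hchr, phiAux_eq n M hM hn M 0 true (by simp)]
    simp
  rw [hphi] at hu hv
  have hper := Vf_per k M hk hkM hke
  obtain ⟨p, hup⟩ := cfactor_shape (Vf n M) M hper u hu
  obtain ⟨q, hvq⟩ := cfactor_shape (Vf n M) M hper v hv
  have hcu : Phi n M a (p + u.length) = Phi n M a p + u.count a := by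
    have := count_eq n M hM hn a u.length p
    rw [← hup] at this; exact this
  have hcv : Phi n M a (q + u.length) = Phi n M a q + v.count a := by
    have := count_eq n M hM hn a v.length q
    rw [← hvq, ← hlen] at this; exact this
  set ℓ := u.length
  have bp1 := F_add_ge n M p ℓ
  have bp2 := F_add_le' n M hM p ℓ
  have bp3 := F_add_le n M hM hn p ℓ
  have bp4 := F_le n M hM hn p
  have bp5 := F_le n M hM hn (p + ℓ)
  have bq1 := F_add_ge n M q ℓ
  have bq2 := F_add_le' n M hM q ℓ
  have bq3 := F_add_le n M hM hn q ℓ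
  have bq4 := F_le n M hM hn q
  have bq5 := F_le n M hM hn (q + ℓ)
  simp only [Set.mem_insert_iff, Set.mem_singleton_iff]
  rcases (by decide : ∀ b : Fin 3, b = 0 ∨ b = 1 ∨ b = 2) a with h|h|h <;> subst h <;>
    simp only [Phi] at hcu hcv <;> simp at hcu hcv <;> omega
end

section
/- Let C(k, M−k) be a Christoffel word with k odd, and let φ be the map sending every 1 to 2 and every even-numbered occurrence of 0 to 1, applied to the square C(k, M−k)^2. Then the M-spectrum of the circular word [φ(C(k,M−k)^2)] equals { ((k−1)/2)·0 + ((k+1)/2)·1 + (M−k)·2, ((k+1)/2)·0 + ((k−1)/2)·1 + (M−k)·2 }, hence has cardinality 2; in particular [φ(C(k,M−k)^2)] is primitive. -/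
def altW : Bool → ℕ → List (Fin 3)
  | _, 0 => []
  | b, n+1 => (if b then (0:Fin 3) else 1) :: altW (!b) n

def par (n : ℕ) : Bool := decide (n % 2 = 1)

lemma par_succ (n : ℕ) : par (n+1) = !par n := by
  rcases Nat.mod_two_eq_zero_or_one n with h | h <;>
    simp [par, Nat.succ_mod_two_eq_one_iff, Nat.succ_mod_two_eq_zero_iff, h]

@[simp] lemma altW_length (b n) : (altW b n).length = n := by
  induction n generalizing b with
  | zero => rfl
  | succ n ih => simp [altW, ih]

lemma altW_append (b n m) : altW b (n+m) = altW b n ++ altW (b.xor (par n)) m := by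
  induction n generalizing b with
  | zero => simp [altW, par]
  | succ n ih =>
    have : n + 1 + m = (n + m) + 1 := by omega
    rw [this]
    show (if b then (0:Fin 3) else 1) :: altW (!b) (n+m) = _
    rw [ih (!b)]
    simp [altW, par_succ, Bool.xor_comm, Bool.xor_assoc]

lemma altW_count0 (b n) : (altW b n).count 0 = if b then (n+1)/2 else n/2 := by
  induction n generalizing b with
  | zero => cases b <;> simp [altW]
  | succ n ih => cases b <;> simp [altW, List.count_cons, ih] <;> omega

lemma altW_count1 (b n) : (altW b n).count 1 = if b then n/2 else (n+1)/2 := by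
  induction n generalizing b with
  | zero => cases b <;> simp [altW]
  | succ n ih => cases b <;> simp [altW, List.count_cons, ih] <;> omega

lemma altW_rotate (b) {m j : ℕ} (hm : m % 2 = 0) (hj : j ≤ m) :
    (altW b m).rotate j = altW (b.xor (par j)) m := by
  have h1 : altW b m = altW b j ++ altW (b.xor (par j)) (m - j) := by
    rw [← altW_append]; congr 1; omega
  have hpar : par (m - j) = par j := by
    simp only [par]; rcases Nat.mod_two_eq_zero_or_one j with h | h <;> simp [h] <;> omega
  rw [List.rotate_eq_drop_append_take (by simpa using hj), h1]
  rw [List.drop_left' (by simp), List.take_left' (by simp)]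
  have h2 : altW (b.xor (par j)) m = altW (b.xor (par j)) (m - j) ++ altW b j := by
    have := altW_append (b.xor (par j)) (m - j) j
    rw [hpar] at this
    have hb : ∀ c d : Bool, ((c ^^ d) ^^ d) = c := by decide
    rw [hb b (par j)] at this
    rw [← this]; congr 1; omega
  rw [h2]

def rho : Fin 3 → Fin 2 := fun x => if x = 2 then 1 else 0

@[simp] lemma phiAux_length (b v) : (phiAux b v).length = v.length := by
  induction v generalizing b with
  | nil => rfl
  | cons a t ih =>
    by_cases h : a = 0 <;> simp [phiAux, h, ih]

lemma map_rho_phiAux (b v) : (phiAux b v).map rho = v := by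
  induction v generalizing b with
  | nil => rfl
  | cons a t ih =>
    by_cases h : a = 0
    · cases b <;> simp [phiAux, h, ih, rho]
    · have : a = 1 := by omega
      simp [phiAux, h, ih, rho, this]

lemma filter_phiAux (b v) : (phiAux b v).filter (· ≠ 2) = altW b (v.count 0) := by
  induction v generalizing b with
  | nil => rfl
  | cons a t ih =>
    simp only [ne_eq, decide_not] at ih ⊢
    by_cases h : a = 0
    · cases b <;> simp [phiAux, h, ih, altW, List.count_cons, List.filter_cons]
    · simp [phiAux, h, ih, List.count_cons, List.filter_cons]

lemma sq_rotate {α : Type*} (l : List α) (i : ℕ) :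
    (l ++ l).rotate i = l.rotate i ++ l.rotate i := by
  induction i generalizing l with
  | zero => simp
  | succ i ih =>
    have h1 : ∀ m : List α, m.rotate (i+1) = (m.rotate 1).rotate i := by
      intro m; rw [List.rotate_rotate]; congr 1; omega
    rw [h1, h1]
    have h2 : (l ++ l).rotate 1 = l.rotate 1 ++ l.rotate 1 := by
      cases l with
      | nil => simp
      | cons a t => simp [List.rotate_cons_succ]
    rw [h2, ih]

lemma christoffel_count1 (k M : ℕ) (hk : 0 < k) (hkM : k < M) :
    (christoffel k M).count 1 = M - k := by
  have hM : 0 < M := by omega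
  set n := M - k with hn
  have key : ∀ N, N ≤ M → ((List.range N).map
      (fun i => if i * n / M < (i + 1) * n / M then (1 : Fin 2) else 0)).count 1 = N * n / M := by
    intro N
    induction N with
    | zero => simp
    | succ N ih =>
      intro hN
      rw [List.range_succ, List.map_append, List.count_append, ih (by omega)]
      have mono : N * n / M ≤ (N+1) * n / M :=
        Nat.div_le_div_right (Nat.mul_le_mul_right _ (by omega))
      have step : (N+1) * n / M ≤ N * n / M + 1 := by
        have h1 : (N+1) * n ≤ N * n + M := by
          have : n ≤ M := by omega
          nlinarith
        calc (N+1) * n / M ≤ (N * n + M) / M := Nat.div_le_div_right h1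
          _ = N * n / M + 1 := Nat.add_div_right _ hM
      by_cases h : N * n / M < (N + 1) * n / M
      · simp [h]; omega
      · simp [h]; omega
  have := key M (le_refl M)
  rw [Nat.mul_div_cancel_left n hM] at this
  simpa [christoffel] using this

lemma fin2_count (l : List (Fin 2)) : l.count 0 + l.count 1 = l.length := by
  induction l with
  | nil => rfl
  | cons a t ih =>
    fin_cases a <;> simp [List.count_cons, ← ih] <;> omega

lemma count2_eq (u : List (Fin 3)) : u.count 2 = (u.map rho).count 1 := by
  induction u with
  | nil => rfl
  | cons a t ih =>
    fin_cases a <;> simp [List.count_cons, rho, ih]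

lemma length_filter_ne2 (u : List (Fin 3)) :
    (u.filter (· ≠ 2)).length = u.length - u.count 2 := by
  induction u with
  | nil => rfl
  | cons a t ih =>
    have h : (t.filter (· ≠ 2)).length ≤ t.length := List.length_filter_le _ _
    have h2 : t.count 2 ≤ t.length := List.count_le_length
    simp only [ne_eq, decide_not] at ih h ⊢
    fin_cases a <;> simp [List.count_cons, List.filter_cons, ih] <;> omega

lemma count_filter_ne2 (u : List (Fin 3)) (a : Fin 3) (ha : a ≠ 2) :
    (u.filter (· ≠ 2)).count a = u.count a := by
  rw [List.count_filter]
  simp [ha]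

lemma window_counts (k M : ℕ) (hk : 0 < k) (hkM : k < M) (hko : Odd k)
    (i : ℕ) (hi : i ≤ 2 * M) :
    let C := christoffel k M
    let w := phiAux true (C ++ C)
    let u := (w.rotate i).take M
    let j := ((w.take i).filter (· ≠ 2)).length
    u.count 2 = M - k ∧
    u.count 0 = (if par j then (k-1)/2 else (k+1)/2) ∧
    u.count 1 = (if par j then (k+1)/2 else (k-1)/2) := by
  intro C w u j
  have hCl : C.length = M := by simp [christoffel, C]
  have hC1 : C.count 1 = M - k := christoffel_count1 k M hk hkM
  have hC0 : C.count 0 = k := by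
    have := fin2_count C
    omega
  have hwl : w.length = 2 * M := by simp [w, hCl]; omega
  have hrho : w.map rho = C ++ C := map_rho_phiAux _ _
  have hfw : w.filter (· ≠ 2) = altW true (2 * k) := by
    have : (C ++ C).count 0 = 2 * k := by simp [List.count_append, hC0]; omega
    rw [show w.filter (· ≠ 2) = altW true ((C ++ C).count 0) from filter_phiAux _ _, this]
  -- split of w
  have hsplit : w.rotate i = w.drop i ++ w.take i :=
    List.rotate_eq_drop_append_take (by omega)
  have hj_le : j ≤ 2 * k := by
    have h1 : w.filter (· ≠ 2) = (w.take i).filter (· ≠ 2) ++ (w.drop i).filter (· ≠ 2) := by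
      rw [← List.filter_append, List.take_append_drop]
    have := congrArg List.length h1
    simp only [hfw, altW_length, List.length_append] at this
    omega
  -- filter of rotation
  have hfrot : (w.rotate i).filter (· ≠ 2) = altW (true.xor (par j)) (2 * k) := by
    have h1 : w.filter (· ≠ 2) = (w.take i).filter (· ≠ 2) ++ (w.drop i).filter (· ≠ 2) := by
      rw [← List.filter_append, List.take_append_drop]
    have h2 : (w.rotate i).filter (· ≠ 2)
        = (w.drop i).filter (· ≠ 2) ++ (w.take i).filter (· ≠ 2) := by
      rw [hsplit, List.filter_append]
    have h3 : (w.filter (· ≠ 2)).rotate j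
        = (w.drop i).filter (· ≠ 2) ++ (w.take i).filter (· ≠ 2) := by
      rw [List.rotate_eq_drop_append_take (by rw [hfw]; simpa using hj_le), h1,
        List.drop_left' rfl, List.take_left' rfl]
    rw [h2, ← h3, hfw, altW_rotate _ (by omega) (by simpa using hj_le)]
  -- count 2 in window
  have hcount2 : u.count 2 = M - k := by
    have h4 : u.map rho = C.rotate i := by
      have : (C ++ C).rotate i = C.rotate i ++ C.rotate i := sq_rotate C i
      simp only [u, List.map_take, List.map_rotate, hrho, this]
      exact List.take_left' (by simp [hCl])
    rw [count2_eq, h4]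
    have := (List.rotate_perm C i).count_eq 1
    omega
  have hul : u.length = M := by
    simp [u, List.length_take, List.length_rotate, hwl]; omega
  have hfu_len : (u.filter (· ≠ 2)).length = k := by
    rw [length_filter_ne2, hul, hcount2]; omega
  -- filter of window is prefix
  have hfu : u.filter (· ≠ 2) = altW (true.xor (par j)) k := by
    have hpre : u.filter (· ≠ 2) <+: (w.rotate i).filter (· ≠ 2) :=
      (List.take_prefix M (w.rotate i)).filter _
    have := List.prefix_iff_eq_take.mp hpre
    rw [hfu_len, hfrot] at this
    rw [this]
    have h2k : 2 * k = k + k := by omega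
    rw [h2k, altW_append, List.take_left' (by simp)]
  obtain ⟨t, ht⟩ := hko
  have hc0 : u.count 0 = (if par j then (k-1)/2 else (k+1)/2) := by
    rw [← count_filter_ne2 u 0 (by decide), hfu, altW_count0]
    cases par j <;> simp <;> omega
  have hc1 : u.count 1 = (if par j then (k+1)/2 else (k-1)/2) := by
    rw [← count_filter_ne2 u 1 (by decide), hfu, altW_count1]
    cases par j <;> simp <;> omega
  exact ⟨hcount2, hc0, hc1⟩


lemma conj_rotate {α : Type*} (w : List α) (i : ℕ) (hi : i ≤ w.length) :
    Conj w (w.rotate i) := by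
  refine ⟨w.take i, w.drop i, (List.take_append_drop i w).symm, ?_⟩
  rw [List.rotate_eq_drop_append_take hi]

lemma cfactor_iff {α : Type*} (u w : List α) (n : ℕ) (hn : n ≤ w.length) (hw : w ≠ []) :
    (CFactor u w ∧ u.length = n) ↔ ∃ i ≤ w.length, u = (w.rotate i).take n := by
  constructor
  · rintro ⟨⟨w', ⟨x, y, hxy, hw'⟩, s, t, hst⟩, hlen⟩
    have h1 : w' = w.rotate x.length := by
      rw [hxy, List.rotate_eq_drop_append_take (by simp), List.drop_left, List.take_left]
      exact hw'
    have h2 : w'.rotate s.length = u ++ (t ++ s) := by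
      rw [← hst, List.append_assoc, List.rotate_eq_drop_append_take (by simp),
        List.drop_left, List.take_left, List.append_assoc]
    have h3 : w.rotate (x.length + s.length) = u ++ (t ++ s) := by
      rw [← List.rotate_rotate, ← h1, h2]
    refine ⟨(x.length + s.length) % w.length, le_of_lt (Nat.mod_lt _ (List.length_pos_iff.mpr hw)), ?_⟩
    rw [List.rotate_mod, h3, ← hlen, List.take_left]
  · rintro ⟨i, hi, hu⟩
    have hl : ((w.rotate i).take n).length = n := by
      simp [List.length_take, List.length_rotate]; omega
    subst hu
    exact ⟨⟨w.rotate i, conj_rotate w i hi, (List.take_prefix _ _).isInfix⟩, hl⟩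

theorem stmt_17 (k M : ℕ) (hk : 0 < k) (hkM : k < M)
    (hcop : Nat.Coprime k (M - k)) (hko : Odd k) :
    circSpec M (phi (christoffel k M ++ christoffel k M)) =
      {fun a : Fin 3 => if a = 0 then (k - 1) / 2 else if a = 1 then (k + 1) / 2 else M - k,
       fun a : Fin 3 => if a = 0 then (k + 1) / 2 else if a = 1 then (k - 1) / 2 else M - k} ∧
    (circSpec M (phi (christoffel k M ++ christoffel k M))).ncard = 2 ∧
    Primitive (phi (christoffel k M ++ christoffel k M)) := by
  have hM : 0 < M := by omega
  set w := phi (christoffel k M ++ christoffel k M) with hwdef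
  have hww : phiAux true (christoffel k M ++ christoffel k M) = w := rfl
  have hCl : (christoffel k M).length = M := by simp [christoffel]
  have hC1 : (christoffel k M).count 1 = M - k := christoffel_count1 k M hk hkM
  have hC0 : (christoffel k M).count 0 = k := by have := fin2_count (christoffel k M); omega
  have hwl : w.length = 2 * M := by rw [← hww]; simp [hCl]; omega
  have hwne : w ≠ [] := by
    intro h; rw [h] at hwl; simp at hwl; omega
  have hfw : w.filter (· ≠ 2) = altW true (2 * k) := by
    have h : (christoffel k M ++ christoffel k M).count 0 = 2 * k := by
      simp [List.count_append, hC0]; omega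
    rw [← hww, filter_phiAux, h]
  have hMle : M ≤ w.length := by omega
  have hspec : circSpec M w =
      {fun a : Fin 3 => if a = 0 then (k - 1) / 2 else if a = 1 then (k + 1) / 2 else M - k,
       fun a : Fin 3 => if a = 0 then (k + 1) / 2 else if a = 1 then (k - 1) / 2 else M - k} := by
    ext p
    simp only [circSpec, Set.mem_setOf_eq, Set.mem_insert_iff, Set.mem_singleton_iff]
    constructor
    · rintro ⟨u, hcf, hlen, hp⟩
      obtain ⟨i, hi, hu⟩ := (cfactor_iff u w M hMle hwne).mp ⟨hcf, hlen⟩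
      obtain ⟨h2c, h0c, h1c⟩ := window_counts k M hk hkM hko i (by omega)
      rw [hww] at h2c h0c h1c
      rw [← hu] at h2c h0c h1c
      subst hp
      cases hb : par ((List.filter (· ≠ 2) (w.take i)).length) with
      | false =>
        rw [hb] at h0c h1c
        simp only [Bool.false_eq_true, if_false] at h0c h1c
        right; funext a; fin_cases a <;> simp [h0c, h1c, h2c]
      | true =>
        rw [hb] at h0c h1c
        simp only [if_pos rfl] at h0c h1c
        left; funext a; fin_cases a <;> simp [h0c, h1c, h2c]
    · have hmem : ∀ i ≤ 2 * M, CFactor ((w.rotate i).take M) w ∧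
          ((w.rotate i).take M).length = M :=
        fun i hi => (cfactor_iff _ w M hMle hwne).mpr ⟨i, by omega, rfl⟩
      rintro (rfl | rfl)
      · -- odd starting parity: use first index where one non-2 letter has been seen
        have hP2M : 1 ≤ ((w.take (2*M)).filter (· ≠ 2)).length := by
          rw [← hwl, List.take_length, hfw]; simp; omega
        have hex : ∃ i, 1 ≤ ((w.take i).filter (· ≠ 2)).length := ⟨2*M, hP2M⟩
        set i0 := Nat.find hex with hi0def
        have hspec0 : 1 ≤ ((w.take i0).filter (· ≠ 2)).length := Nat.find_spec hex
        have hle : i0 ≤ 2*M := Nat.find_min' hex hP2M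
        have hpos : i0 ≠ 0 := by
          intro h; rw [h] at hspec0; simp at hspec0
        have hprev : ¬ 1 ≤ ((w.take (i0-1)).filter (· ≠ 2)).length :=
          Nat.find_min hex (by omega)
        have hstep : ((w.take i0).filter (· ≠ 2)).length ≤
            ((w.take (i0-1)).filter (· ≠ 2)).length + 1 := by
          have h1 : w.take i0 = w.take (i0-1) ++ (w.drop (i0-1)).take 1 := by
            rw [← List.take_add]; congr 1; omega
          rw [h1, List.filter_append, List.length_append]
          have h2 : (((w.drop (i0-1)).take 1).filter (· ≠ 2)).length ≤ 1 :=
            le_trans (List.length_filter_le _ _) (by simp)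
          omega
        have hj1 : ((w.take i0).filter (· ≠ 2)).length = 1 := by omega
        obtain ⟨h2c, h0c, h1c⟩ := window_counts k M hk hkM hko i0 hle
        rw [hww] at h2c h0c h1c
        rw [hj1] at h0c h1c
        rw [show par 1 = true from rfl] at h0c h1c
        simp only [if_pos rfl] at h0c h1c
        exact ⟨(w.rotate i0).take M, (hmem i0 hle).1, (hmem i0 hle).2,
          by funext a; fin_cases a <;> simp [h0c, h1c, h2c]⟩
      · obtain ⟨h2c, h0c, h1c⟩ := window_counts k M hk hkM hko 0 (by omega)
        rw [hww] at h2c h0c h1c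
        rw [show ((w.take 0).filter (· ≠ 2)).length = 0 from by simp] at h0c h1c
        rw [show par 0 = false from rfl] at h0c h1c
        simp only [Bool.false_eq_true, if_false] at h0c h1c
        simp only [List.rotate_zero] at h2c h0c h1c
        exact ⟨(w.rotate 0).take M, (hmem 0 (by omega)).1, (hmem 0 (by omega)).2,
          by funext a; fin_cases a <;> simp [h0c, h1c, h2c]⟩
  have hne : (fun a : Fin 3 => if a = 0 then (k - 1) / 2 else if a = 1 then (k + 1) / 2 else M - k)
      ≠ (fun a : Fin 3 => if a = 0 then (k + 1) / 2 else if a = 1 then (k - 1) / 2 else M - k) := by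
    intro h
    have h0 := congrFun h 0
    obtain ⟨t, ht⟩ := hko
    simp at h0
    omega
  refine ⟨hspec, by rw [hspec, Set.ncard_pair hne], ?_⟩
  intro u q hq heq
  have hcnt : ∀ a : Fin 3, w.count a = q * u.count a := by
    intro a
    rw [heq, List.count_flatten]
    simp [List.map_replicate, List.sum_replicate, smul_eq_mul]
  have hw0 : w.count 0 = k := by
    rw [← count_filter_ne2 w 0 (by decide), hfw, altW_count0]
    simp; omega
  have hw2 : w.count 2 = 2*(M-k) := by
    rw [count2_eq, ← hww, map_rho_phiAux, List.count_append, hC1]; omega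
  have hq0 : q ∣ k := ⟨u.count 0, by rw [← hw0, hcnt 0]⟩
  have hq2 : q ∣ 2*(M-k) := ⟨u.count 2, by rw [← hw2, hcnt 2]⟩
  have hcop2 : Nat.Coprime k (2*(M-k)) :=
    Nat.Coprime.mul_right (Odd.coprime_two_right hko) hcop
  have hdvd1 : q ∣ 1 := hcop2 ▸ Nat.dvd_gcd hq0 hq2
  have := Nat.le_of_dvd one_pos hdvd1
  omega
end
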